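/- arXiv:1801.03217 — 4 statements merged into one kernel-verified Lean document; each statement's English description precedes it below -/
import Mathlib

section
/- Under criticality (E[ξ]=1, Var(ξ)=2B ∈ (0,∞)), for every λ > 0, lim_{n→∞} Bn (f_n(e^{-λ/(Bn)}) - f_n(0)) = 1/(1+λ), where f_n is the n-th iterate of the offspring generating function. -/
open MeasureTheory Filter Topology Asymptotics Real

/-- Probability generating function of the offspring distribution `p`. -/
noncomputable def pgf (p : ℕ → ℝ) (s : ℝ) : ℝ := ∑' k, p k * s ^ k

/-- `n`-th functional iterate of the offspring generating function. -/
noncomputable def pgfIter (p : ℕ → ℝ) : ℕ → ℝ → ℝ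
  | 0 => fun s => s
  | n + 1 => fun s => pgf p (pgfIter p n s)

namespace Yag

noncomputable def aF (p : ℕ → ℝ) (s : ℝ) : ℝ :=
  ∑' k, p k * ∑ i ∈ Finset.range k, s ^ i

noncomputable def bF (p : ℕ → ℝ) (s : ℝ) : ℝ :=
  ∑' k, p k * ∑ i ∈ Finset.range k, ∑ j ∈ Finset.range i, s ^ j

variable {p : ℕ → ℝ} {B : ℝ}


lemma summable_p (hp1 : ∑' k, p k = 1) : Summable p := by
  by_contra h
  rw [tsum_eq_zero_of_not_summable h] at hp1
  norm_num at hp1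

lemma summable_kp (hmean : ∑' k : ℕ, (k : ℝ) * p k = 1) :
    Summable (fun k : ℕ => (k : ℝ) * p k) := by
  by_contra h
  rw [tsum_eq_zero_of_not_summable h] at hmean
  norm_num at hmean

lemma inner1_nonneg {s : ℝ} (hs : 0 ≤ s) (k : ℕ) :
    0 ≤ ∑ i ∈ Finset.range k, s ^ i :=
  Finset.sum_nonneg fun i _ => pow_nonneg hs i

lemma inner1_le {s : ℝ} (hs0 : 0 ≤ s) (hs1 : s ≤ 1) (k : ℕ) :
    ∑ i ∈ Finset.range k, s ^ i ≤ (k : ℝ) := by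
  calc ∑ i ∈ Finset.range k, s ^ i ≤ ∑ i ∈ Finset.range k, 1 :=
        Finset.sum_le_sum fun i _ => pow_le_one₀ hs0 hs1
    _ = (k : ℝ) := by simp

lemma inner1_mono {s t : ℝ} (hs : 0 ≤ s) (hst : s ≤ t) (k : ℕ) :
    ∑ i ∈ Finset.range k, s ^ i ≤ ∑ i ∈ Finset.range k, t ^ i :=
  Finset.sum_le_sum fun i _ => pow_le_pow_left₀ hs hst i

lemma inner2_nonneg {s : ℝ} (hs : 0 ≤ s) (k : ℕ) :
    0 ≤ ∑ i ∈ Finset.range k, ∑ j ∈ Finset.range i, s ^ j :=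
  Finset.sum_nonneg fun i _ => inner1_nonneg hs i

lemma inner2_le {s : ℝ} (hs0 : 0 ≤ s) (hs1 : s ≤ 1) (k : ℕ) :
    ∑ i ∈ Finset.range k, ∑ j ∈ Finset.range i, s ^ j ≤ (k : ℝ) ^ 2 := by
  calc ∑ i ∈ Finset.range k, ∑ j ∈ Finset.range i, s ^ j
      ≤ ∑ i ∈ Finset.range k, (k : ℝ) := by
        refine Finset.sum_le_sum fun i hi => (inner1_le hs0 hs1 i).trans ?_
        exact_mod_cast Nat.cast_le.2 (Finset.mem_range.1 hi).le
    _ = (k : ℝ) * k := by simp [mul_comm]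
    _ = (k : ℝ) ^ 2 := by ring

lemma summable_aterm (hp0 : ∀ k, 0 ≤ p k) (hmean : ∑' k : ℕ, (k : ℝ) * p k = 1)
    {s : ℝ} (hs0 : 0 ≤ s) (hs1 : s ≤ 1) :
    Summable (fun k => p k * ∑ i ∈ Finset.range k, s ^ i) := by
  refine Summable.of_nonneg_of_le (fun k => mul_nonneg (hp0 k) (inner1_nonneg hs0 k))
    (fun k => ?_) (summable_kp hmean)
  rw [mul_comm (k:ℝ)]
  exact mul_le_mul_of_nonneg_left (inner1_le hs0 hs1 k) (hp0 k)

lemma summable_bterm (hp0 : ∀ k, 0 ≤ p k)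
    (hsq : Summable fun k : ℕ => (k : ℝ) ^ 2 * p k)
    {s : ℝ} (hs0 : 0 ≤ s) (hs1 : s ≤ 1) :
    Summable (fun k => p k * ∑ i ∈ Finset.range k, ∑ j ∈ Finset.range i, s ^ j) := by
  refine Summable.of_nonneg_of_le (fun k => mul_nonneg (hp0 k) (inner2_nonneg hs0 k))
    (fun k => ?_) hsq
  rw [mul_comm ((k:ℝ)^2)]
  exact mul_le_mul_of_nonneg_left (inner2_le hs0 hs1 k) (hp0 k)

lemma summable_pgfterm (hp0 : ∀ k, 0 ≤ p k) (hp1 : ∑' k, p k = 1)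
    {s : ℝ} (hs0 : 0 ≤ s) (hs1 : s ≤ 1) :
    Summable (fun k => p k * s ^ k) := by
  refine Summable.of_nonneg_of_le (fun k => mul_nonneg (hp0 k) (pow_nonneg hs0 k))
    (fun k => ?_) (summable_p hp1)
  nth_rewrite 2 [← mul_one (p k)]
  exact mul_le_mul_of_nonneg_left (pow_le_one₀ hs0 hs1) (hp0 k)

lemma one_sub_pgf (hp0 : ∀ k, 0 ≤ p k) (hp1 : ∑' k, p k = 1)
    (hmean : ∑' k : ℕ, (k : ℝ) * p k = 1) {s : ℝ} (hs0 : 0 ≤ s) (hs1 : s ≤ 1) :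
    1 - pgf p s = (1 - s) * aF p s := by
  have h1 : 1 - pgf p s = ∑' k, (p k - p k * s ^ k) := by
    rw [Summable.tsum_sub (summable_p hp1) (summable_pgfterm hp0 hp1 hs0 hs1), hp1, pgf]
  rw [h1, aF, ← tsum_mul_left]
  refine tsum_congr fun k => ?_
  have hg : (1 - s) * (∑ i ∈ Finset.range k, s ^ i) = 1 - s ^ k := by
    linear_combination -(geom_sum_mul s k)
  nlinarith [hg, hp0 k]

lemma one_sub_aF (hp0 : ∀ k, 0 ≤ p k) (hp1 : ∑' k, p k = 1)
    (hmean : ∑' k : ℕ, (k : ℝ) * p k = 1)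
    (hsq : Summable fun k : ℕ => (k : ℝ) ^ 2 * p k)
    {s : ℝ} (hs0 : 0 ≤ s) (hs1 : s ≤ 1) :
    1 - aF p s = (1 - s) * bF p s := by
  have h1 : 1 - aF p s = ∑' k : ℕ, ((k : ℝ) * p k - p k * ∑ i ∈ Finset.range k, s ^ i) := by
    rw [Summable.tsum_sub (summable_kp hmean) (summable_aterm hp0 hmean hs0 hs1), hmean, aF]
  rw [h1, bF, ← tsum_mul_left]
  refine tsum_congr fun k => ?_
  have hkey : (k : ℝ) - ∑ i ∈ Finset.range k, s ^ i
      = (1 - s) * ∑ i ∈ Finset.range k, ∑ j ∈ Finset.range i, s ^ j := by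
    rw [Finset.mul_sum]
    have : (k : ℝ) = ∑ i ∈ Finset.range k, (1:ℝ) := by simp
    rw [this, ← Finset.sum_sub_distrib]
    refine Finset.sum_congr rfl fun i _ => ?_
    linear_combination geom_sum_mul s i
  linear_combination p k * hkey

lemma aF_one (hmean : ∑' k : ℕ, (k : ℝ) * p k = 1) : aF p 1 = 1 := by
  have h : (fun k : ℕ => p k * ∑ i ∈ Finset.range k, (1:ℝ) ^ i)
      = fun k : ℕ => (k : ℝ) * p k := by
    funext k; simp [mul_comm]
  rw [aF, h, hmean]

lemma sum_range_id_real (k : ℕ) :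
    ∑ i ∈ Finset.range k, (i : ℝ) = ((k : ℝ) ^ 2 - k) / 2 := by
  induction k with
  | zero => simp
  | succ n ih => rw [Finset.sum_range_succ, ih]; push_cast; ring

lemma bF_one (hmean : ∑' k : ℕ, (k : ℝ) * p k = 1)
    (hsq : Summable fun k : ℕ => (k : ℝ) ^ 2 * p k)
    (hvar : (∑' k : ℕ, (k : ℝ) ^ 2 * p k) - 1 = 2 * B) : bF p 1 = B := by
  have h1 : bF p 1 = ∑' k : ℕ, (1/2) * ((k:ℝ)^2 * p k - (k:ℝ) * p k) := by
    refine tsum_congr fun k => ?_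
    have : ∑ i ∈ Finset.range k, ∑ j ∈ Finset.range i, (1:ℝ) ^ j
        = ((k : ℝ) ^ 2 - k) / 2 := by
      simp only [one_pow, Finset.sum_const, Finset.card_range, nsmul_eq_mul, mul_one]
      exact sum_range_id_real k
    rw [this]; ring
  rw [h1, tsum_mul_left, Summable.tsum_sub hsq (summable_kp hmean), hmean]
  linarith

lemma aF_mono (hp0 : ∀ k, 0 ≤ p k) (hmean : ∑' k : ℕ, (k : ℝ) * p k = 1)
    {s t : ℝ} (hs0 : 0 ≤ s) (hst : s ≤ t) (ht1 : t ≤ 1) :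
    aF p s ≤ aF p t :=
  Summable.tsum_le_tsum (fun k => mul_le_mul_of_nonneg_left (inner1_mono hs0 hst k) (hp0 k))
    (summable_aterm hp0 hmean hs0 (hst.trans ht1))
    (summable_aterm hp0 hmean (hs0.trans hst) ht1)

lemma inner2_mono {s t : ℝ} (hs : 0 ≤ s) (hst : s ≤ t) (k : ℕ) :
    ∑ i ∈ Finset.range k, ∑ j ∈ Finset.range i, s ^ j
      ≤ ∑ i ∈ Finset.range k, ∑ j ∈ Finset.range i, t ^ j :=
  Finset.sum_le_sum fun i _ => inner1_mono hs hst i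

lemma bF_mono (hp0 : ∀ k, 0 ≤ p k)
    (hsq : Summable fun k : ℕ => (k : ℝ) ^ 2 * p k)
    {s t : ℝ} (hs0 : 0 ≤ s) (hst : s ≤ t) (ht1 : t ≤ 1) :
    bF p s ≤ bF p t :=
  Summable.tsum_le_tsum (fun k => mul_le_mul_of_nonneg_left (inner2_mono hs0 hst k) (hp0 k))
    (summable_bterm hp0 hsq hs0 (hst.trans ht1))
    (summable_bterm hp0 hsq (hs0.trans hst) ht1)

lemma aF_le_one (hp0 : ∀ k, 0 ≤ p k) (hmean : ∑' k : ℕ, (k : ℝ) * p k = 1)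
    {s : ℝ} (hs0 : 0 ≤ s) (hs1 : s ≤ 1) : aF p s ≤ 1 := by
  rw [← aF_one hmean]; exact aF_mono hp0 hmean hs0 hs1 le_rfl

lemma bF_le (hp0 : ∀ k, 0 ≤ p k) (hmean : ∑' k : ℕ, (k : ℝ) * p k = 1)
    (hsq : Summable fun k : ℕ => (k : ℝ) ^ 2 * p k)
    (hvar : (∑' k : ℕ, (k : ℝ) ^ 2 * p k) - 1 = 2 * B)
    {s : ℝ} (hs0 : 0 ≤ s) (hs1 : s ≤ 1) : bF p s ≤ B := by
  rw [← bF_one hmean hsq hvar]; exact bF_mono hp0 hsq hs0 hs1 le_rfl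

lemma bF_nonneg (hp0 : ∀ k, 0 ≤ p k) {s : ℝ} (hs0 : 0 ≤ s) : 0 ≤ bF p s :=
  tsum_nonneg fun k => mul_nonneg (hp0 k) (inner2_nonneg hs0 k)

lemma p_zero_lt_one (hp0 : ∀ k, 0 ≤ p k) (hp1 : ∑' k, p k = 1)
    (hmean : ∑' k : ℕ, (k : ℝ) * p k = 1) : p 0 < 1 := by
  have hex : ∃ k : ℕ, (k : ℝ) * p k ≠ 0 := by
    by_contra h
    push_neg at h
    rw [tsum_congr (fun k => h k), tsum_zero] at hmean
    norm_num at hmean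
  obtain ⟨k, hk⟩ := hex
  have hk0 : k ≠ 0 := by rintro rfl; simp at hk
  have hpk : 0 < p k := (hp0 k).lt_of_ne fun h => hk (by rw [← h]; ring)
  have hsum : p 0 + p k ≤ 1 := by
    have := Summable.sum_le_tsum ({0, k} : Finset ℕ) (fun i _ => hp0 i) (summable_p hp1)
    rwa [Finset.sum_pair (Ne.symm hk0), hp1] at this
  linarith

lemma aF_zero (hp1 : ∑' k, p k = 1) : aF p 0 = 1 - p 0 := by
  have h1 : ∀ k : ℕ, p k * ∑ i ∈ Finset.range k, (0:ℝ) ^ i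
      = p k - (if k = 0 then p 0 else 0) := by
    intro k
    rw [zero_geom_sum]
    rcases eq_or_ne k 0 with rfl | hk
    · simp
    · simp [hk]
  rw [aF, tsum_congr h1, Summable.tsum_sub (summable_p hp1)
    (summable_of_ne_finset_zero (s := {0}) (by intro b hb; simp at hb ⊢; exact fun h => absurd h hb)),
    hp1, tsum_ite_eq]

lemma aF_pos (hp0 : ∀ k, 0 ≤ p k) (hp1 : ∑' k, p k = 1)
    (hmean : ∑' k : ℕ, (k : ℝ) * p k = 1) {s : ℝ} (hs0 : 0 ≤ s) (hs1 : s ≤ 1) :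
    0 < aF p s := by
  have h0 : 0 < aF p 0 := by
    rw [aF_zero hp1]; linarith [p_zero_lt_one hp0 hp1 hmean]
  exact h0.trans_le (aF_mono hp0 hmean le_rfl hs0 hs1)

section Dyn
variable (hp0 : ∀ k, 0 ≤ p k) (hp1 : ∑' k, p k = 1)
  (hmean : ∑' k : ℕ, (k : ℝ) * p k = 1)

include hp0 hp1 hmean

lemma pgf_nonneg {s : ℝ} (hs0 : 0 ≤ s) : 0 ≤ pgf p s :=
  tsum_nonneg fun k => mul_nonneg (hp0 k) (pow_nonneg hs0 k)

lemma pgf_lt_one {s : ℝ} (hs0 : 0 ≤ s) (hs1 : s < 1) : pgf p s < 1 := by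
  have h := one_sub_pgf hp0 hp1 hmean hs0 hs1.le
  nlinarith [aF_pos hp0 hp1 hmean hs0 hs1.le]

lemma self_le_pgf {s : ℝ} (hs0 : 0 ≤ s) (hs1 : s ≤ 1) : s ≤ pgf p s := by
  have h := one_sub_pgf hp0 hp1 hmean hs0 hs1
  nlinarith [aF_le_one hp0 hmean hs0 hs1]

lemma pgf_mono {s t : ℝ} (hs0 : 0 ≤ s) (hst : s ≤ t) (ht1 : t ≤ 1) :
    pgf p s ≤ pgf p t :=
  Summable.tsum_le_tsum (fun k => mul_le_mul_of_nonneg_left (pow_le_pow_left₀ hs0 hst k) (hp0 k))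
    (summable_pgfterm hp0 hp1 hs0 (hst.trans ht1))
    (summable_pgfterm hp0 hp1 (hs0.trans hst) ht1)

lemma iter_mem {s : ℝ} (hs0 : 0 ≤ s) (hs1 : s < 1) (n : ℕ) :
    0 ≤ pgfIter p n s ∧ pgfIter p n s < 1 := by
  induction n with
  | zero => exact ⟨hs0, hs1⟩
  | succ n ih =>
    exact ⟨pgf_nonneg hp0 hp1 hmean ih.1, pgf_lt_one hp0 hp1 hmean ih.1 ih.2⟩

lemma iter_mono_s {s t : ℝ} (hs0 : 0 ≤ s) (hst : s ≤ t) (ht1 : t < 1) (n : ℕ) :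
    pgfIter p n s ≤ pgfIter p n t := by
  induction n with
  | zero => exact hst
  | succ n ih =>
    exact pgf_mono hp0 hp1 hmean (iter_mem hp0 hp1 hmean hs0 (hst.trans_lt ht1) n).1
      ih (iter_mem hp0 hp1 hmean (hs0.trans hst) ht1 n).2.le

end Dyn

noncomputable def eps (p : ℕ → ℝ) (s : ℝ) : ℝ := bF p s / aF p s

section Tel
variable (hp0 : ∀ k, 0 ≤ p k) (hp1 : ∑' k, p k = 1)
  (hmean : ∑' k : ℕ, (k : ℝ) * p k = 1)
  (hsq : Summable fun k : ℕ => (k : ℝ) ^ 2 * p k)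
include hp0 hp1 hmean hsq

lemma inv_one_sub_pgf {s : ℝ} (hs0 : 0 ≤ s) (hs1 : s < 1) :
    1 / (1 - pgf p s) = 1 / (1 - s) + eps p s := by
  have ha := aF_pos hp0 hp1 hmean hs0 hs1.le
  have h1 := one_sub_pgf hp0 hp1 hmean hs0 hs1.le
  have h2 := one_sub_aF hp0 hp1 hmean hsq hs0 hs1.le
  have hsne : (1 : ℝ) - s ≠ 0 := by linarith
  rw [h1, eps]
  field_simp
  linear_combination h2

lemma telescope {s : ℝ} (hs0 : 0 ≤ s) (hs1 : s < 1) (n : ℕ) :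
    1 / (1 - pgfIter p n s)
      = 1 / (1 - s) + ∑ j ∈ Finset.range n, eps p (pgfIter p j s) := by
  induction n with
  | zero => simp [pgfIter]
  | succ n ih =>
    have hm := iter_mem hp0 hp1 hmean hs0 hs1 n
    show 1 / (1 - pgf p (pgfIter p n s)) = _
    rw [inv_one_sub_pgf hp0 hp1 hmean hsq hm.1 hm.2, ih, Finset.sum_range_succ]
    ring

end Tel

lemma tendsto_n_one_sub_exp {c : ℝ} (hc : 0 < c) :
    Tendsto (fun n : ℕ => (n : ℝ) * (1 - Real.exp (-(c / n)))) atTop (𝓝 c) := by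
  have h2 : HasDerivAt (fun x : ℝ => -x) (-1) 0 := (hasDerivAt_id 0).neg
  have h3 : HasDerivAt (fun x : ℝ => Real.exp (-x)) (-1) 0 := by
    have := (Real.hasDerivAt_exp (-0 : ℝ)).comp 0 h2
    simpa [Function.comp_def] using this
  have h4 : HasDerivAt (fun x : ℝ => 1 - Real.exp (-x)) 1 0 := by
    simpa using h3.const_sub 1
  have hy : Tendsto (fun n : ℕ => c / n) atTop (𝓝[≠] (0:ℝ)) := by
    refine tendsto_nhdsWithin_of_tendsto_nhds_of_eventually_within _ ?_ ?_
    · exact tendsto_const_nhds.div_atTop tendsto_natCast_atTop_atTop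
    · filter_upwards [eventually_ge_atTop 1] with n hn
      have hn0 : (0:ℝ) < n := by exact_mod_cast Nat.lt_of_lt_of_le Nat.zero_lt_one hn
      have : c / (n:ℝ) ≠ 0 := by positivity
      simpa using this
  have hslope := (hasDerivAt_iff_tendsto_slope.mp h4).comp hy
  have hmul : Tendsto (fun n : ℕ =>
      c * slope (fun x : ℝ => 1 - Real.exp (-x)) 0 (c / n)) atTop (𝓝 (c * 1)) :=
    hslope.const_mul c
  rw [mul_one] at hmul
  refine hmul.congr' ?_
  filter_upwards [eventually_ge_atTop 1] with n hn
  have hn0 : (0:ℝ) < n := by exact_mod_cast Nat.lt_of_lt_of_le Nat.zero_lt_one hn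
  rw [slope_def_field]
  field_simp
  rw [neg_zero, Real.exp_zero, mul_zero, sub_zero, div_eq_iff hc.ne']; ring

lemma bF_approx (hp0 : ∀ k, 0 ≤ p k) (hmean : ∑' k : ℕ, (k : ℝ) * p k = 1)
    (hsq : Summable fun k : ℕ => (k : ℝ) ^ 2 * p k)
    (hvar : (∑' k : ℕ, (k : ℝ) ^ 2 * p k) - 1 = 2 * B)
    {δ : ℝ} (hδ : 0 < δ) :
    ∃ s₀ : ℝ, 0 ≤ s₀ ∧ s₀ < 1 ∧ B - δ < bF p s₀ := by
  set g : ℕ → ℝ → ℝ :=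
    fun k s => p k * ∑ i ∈ Finset.range k, ∑ j ∈ Finset.range i, s ^ j with hg
  have hsum : Summable (fun k => g k 1) := summable_bterm hp0 hsq zero_le_one le_rfl
  have htsum : ∑' k, g k 1 = B := bF_one hmean hsq hvar
  have htend := hsum.hasSum.tendsto_sum_nat
  rw [htsum] at htend
  obtain ⟨N, hN⟩ :=
    (htend.eventually (eventually_gt_nhds (by linarith : B - δ/2 < B))).exists
  have hcont : ContinuousAt (fun s : ℝ => ∑ k ∈ Finset.range N, g k s) 1 := by
    refine Continuous.continuousAt ?_
    refine continuous_finset_sum _ fun k _ => Continuous.mul continuous_const ?_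
    exact continuous_finset_sum _ fun i _ => continuous_finset_sum _ fun j _ => by
      exact continuous_pow j
  have h2 : Tendsto (fun s : ℝ => ∑ k ∈ Finset.range N, g k s) (𝓝[<] (1:ℝ))
      (𝓝 (∑ k ∈ Finset.range N, g k 1)) := hcont.tendsto.mono_left nhdsWithin_le_nhds
  have h3 : ∀ᶠ s in 𝓝[<] (1:ℝ), B - δ/2 < ∑ k ∈ Finset.range N, g k s :=
    h2.eventually (eventually_gt_nhds hN)
  have h4 : Set.Ioo (0:ℝ) 1 ∈ 𝓝[<] (1:ℝ) :=
    Ioo_mem_nhdsLT_of_mem ⟨zero_lt_one, le_rfl⟩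
  obtain ⟨s₀, hs₀g, hs₀mem⟩ := (h3.and (eventually_of_mem h4 fun x hx => hx)).exists
  refine ⟨s₀, hs₀mem.1.le, hs₀mem.2, ?_⟩
  have h5 : ∑ k ∈ Finset.range N, g k s₀ ≤ bF p s₀ :=
    Summable.sum_le_tsum _ (fun k _ => mul_nonneg (hp0 k) (inner2_nonneg hs₀mem.1.le k))
      (summable_bterm hp0 hsq hs₀mem.1.le hs₀mem.2.le)
  linarith

lemma aF_approx (hp0 : ∀ k, 0 ≤ p k) (hmean : ∑' k : ℕ, (k : ℝ) * p k = 1)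
    {δ : ℝ} (hδ : 0 < δ) :
    ∃ s₀ : ℝ, 0 ≤ s₀ ∧ s₀ < 1 ∧ 1 - δ < aF p s₀ := by
  set g : ℕ → ℝ → ℝ := fun k s => p k * ∑ i ∈ Finset.range k, s ^ i with hg
  have hsum : Summable (fun k => g k 1) := summable_aterm hp0 hmean zero_le_one le_rfl
  have htsum : ∑' k, g k 1 = 1 := aF_one hmean
  have htend := hsum.hasSum.tendsto_sum_nat
  rw [htsum] at htend
  obtain ⟨N, hN⟩ :=
    (htend.eventually (eventually_gt_nhds (by linarith : 1 - δ/2 < 1))).exists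
  have hcont : ContinuousAt (fun s : ℝ => ∑ k ∈ Finset.range N, g k s) 1 := by
    refine Continuous.continuousAt ?_
    refine continuous_finset_sum _ fun k _ => Continuous.mul continuous_const ?_
    exact continuous_finset_sum _ fun i _ => by exact continuous_pow i
  have h2 : Tendsto (fun s : ℝ => ∑ k ∈ Finset.range N, g k s) (𝓝[<] (1:ℝ))
      (𝓝 (∑ k ∈ Finset.range N, g k 1)) := hcont.tendsto.mono_left nhdsWithin_le_nhds
  have h3 : ∀ᶠ s in 𝓝[<] (1:ℝ), 1 - δ/2 < ∑ k ∈ Finset.range N, g k s :=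
    h2.eventually (eventually_gt_nhds hN)
  have h4 : Set.Ioo (0:ℝ) 1 ∈ 𝓝[<] (1:ℝ) :=
    Ioo_mem_nhdsLT_of_mem ⟨zero_lt_one, le_rfl⟩
  obtain ⟨s₀, hs₀g, hs₀mem⟩ := (h3.and (eventually_of_mem h4 fun x hx => hx)).exists
  refine ⟨s₀, hs₀mem.1.le, hs₀mem.2, ?_⟩
  have h5 : ∑ k ∈ Finset.range N, g k s₀ ≤ aF p s₀ :=
    Summable.sum_le_tsum _ (fun k _ => mul_nonneg (hp0 k) (inner1_nonneg hs₀mem.1.le k))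
      (summable_aterm hp0 hmean hs₀mem.1.le hs₀mem.2.le)
  linarith

lemma tendsto_comp_traj {F : ℝ → ℝ} {L : ℝ}
    (hmono : ∀ s t : ℝ, 0 ≤ s → s ≤ t → t ≤ 1 → F s ≤ F t)
    (hle : ∀ s : ℝ, 0 ≤ s → s ≤ 1 → F s ≤ L)
    (happ : ∀ δ : ℝ, 0 < δ → ∃ s₀ : ℝ, 0 ≤ s₀ ∧ s₀ < 1 ∧ L - δ < F s₀)
    {u : ℕ → ℝ} (hu0 : ∀ n, 0 ≤ u n) (hu1 : ∀ n, u n ≤ 1)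
    (hu : Tendsto u atTop (𝓝 1)) :
    Tendsto (fun n => F (u n)) atTop (𝓝 L) := by
  rw [Metric.tendsto_atTop]
  intro δ hδ
  obtain ⟨s₀, hs0, hs1, hF⟩ := happ (δ/2) (by linarith)
  obtain ⟨N, hN⟩ := eventually_atTop.mp (hu.eventually (eventually_gt_nhds hs1))
  refine ⟨N, fun n hn => ?_⟩
  have h1 : F s₀ ≤ F (u n) := hmono s₀ (u n) hs0 (hN n hn).le (hu1 n)
  have h2 : F (u n) ≤ L := hle _ (hu0 n) (hu1 n)
  rw [Real.dist_eq, abs_lt]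
  constructor <;> linarith

section Main
variable (hp0 : ∀ k, 0 ≤ p k) (hp1 : ∑' k, p k = 1)
  (hmean : ∑' k : ℕ, (k : ℝ) * p k = 1) (hB : 0 < B)
  (hsq : Summable fun k : ℕ => (k : ℝ) ^ 2 * p k)
  (hvar : (∑' k : ℕ, (k : ℝ) ^ 2 * p k) - 1 = 2 * B)

include hp0 hmean hB hsq hvar in
lemma exists_k2 : ∃ k : ℕ, 2 ≤ k ∧ 0 < p k := by
  by_contra h
  push_neg at h
  have hz : ∀ k : ℕ, 2 ≤ k → p k = 0 := fun k hk => le_antisymm (h k hk) (hp0 k)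
  have hc : ∀ k : ℕ, (k : ℝ) ^ 2 * p k = (k : ℝ) * p k := by
    intro k
    match k with
    | 0 => norm_num
    | 1 => norm_num
    | (m + 2) => rw [hz (m + 2) (by omega)]; ring
  rw [tsum_congr hc, hmean] at hvar
  linarith

include hp0 hp1 hmean hB hsq hvar in
lemma bF_zero_pos : 0 < bF p 0 := by
  obtain ⟨k, hk2, hpk⟩ := exists_k2 hp0 hmean hB hsq hvar
  have hin : (1 : ℝ) ≤ ∑ i ∈ Finset.range k, ∑ j ∈ Finset.range i, (0:ℝ) ^ j := by
    have h1 : ∑ j ∈ Finset.range 1, (0:ℝ) ^ j = 1 := by simp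
    calc (1:ℝ) = ∑ j ∈ Finset.range 1, (0:ℝ) ^ j := h1.symm
      _ ≤ _ := Finset.single_le_sum (f := fun i => ∑ j ∈ Finset.range i, (0:ℝ) ^ j)
          (fun i _ => inner1_nonneg le_rfl i) (Finset.mem_range.2 (by omega))
  have h2 : p k * 1 ≤ p k * ∑ i ∈ Finset.range k, ∑ j ∈ Finset.range i, (0:ℝ) ^ j :=
    mul_le_mul_of_nonneg_left hin hpk.le
  have h3 : p k * ∑ i ∈ Finset.range k, ∑ j ∈ Finset.range i, (0:ℝ) ^ j ≤ bF p 0 :=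
    Summable.le_tsum (summable_bterm hp0 hsq le_rfl zero_le_one) k
      (fun j _ => mul_nonneg (hp0 j) (inner2_nonneg le_rfl j))
  calc (0:ℝ) < p k := hpk
    _ = p k * 1 := (mul_one _).symm
    _ ≤ bF p 0 := h2.trans h3

include hp0 hp1 hmean in
lemma bF_le_eps {s : ℝ} (hs0 : 0 ≤ s) (hs1 : s ≤ 1) : bF p s ≤ eps p s := by
  have ha := aF_pos hp0 hp1 hmean hs0 hs1
  have ha1 := aF_le_one hp0 hmean hs0 hs1
  have hb := bF_nonneg hp0 hs0
  rw [eps, le_div_iff₀ ha]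
  nlinarith

include hp0 hp1 hmean hB hsq hvar in
lemma eps_le {s : ℝ} (hs0 : 0 ≤ s) (hs1 : s ≤ 1) {t : ℝ} (ht0 : 0 ≤ t)
    (hts : t ≤ s) : eps p s ≤ B / aF p t := by
  have hat := aF_pos hp0 hp1 hmean ht0 (hts.trans hs1)
  have hmono : aF p t ≤ aF p s := aF_mono hp0 hmean ht0 hts hs1
  have hbB : bF p s ≤ B := bF_le hp0 hmean hsq hvar hs0 hs1
  rw [eps]
  exact div_le_div₀ hB.le hbB hat hmono

include hp0 hp1 hmean hB hsq hvar in
lemma tendsto_iter_zero_one :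
    Tendsto (fun n => pgfIter p n 0) atTop (𝓝 1) := by
  set b0 := bF p 0 with hb0
  have hb0pos := bF_zero_pos hp0 hp1 hmean hB hsq hvar
  have key : ∀ n : ℕ, 1 - pgfIter p n 0 ≤ 1 / (1 + n * b0) := by
    intro n
    have htel := telescope hp0 hp1 hmean hsq le_rfl zero_lt_one n
    have hsum : (n : ℝ) * b0 ≤ ∑ j ∈ Finset.range n, eps p (pgfIter p j 0) := by
      have : ∀ j ∈ Finset.range n, b0 ≤ eps p (pgfIter p j 0) := by
        intro j _
        have hm := iter_mem hp0 hp1 hmean le_rfl zero_lt_one j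
        calc b0 ≤ bF p (pgfIter p j 0) := bF_mono hp0 hsq le_rfl hm.1 hm.2.le
          _ ≤ eps p (pgfIter p j 0) := bF_le_eps hp0 hp1 hmean hm.1 hm.2.le
      calc (n : ℝ) * b0 = ∑ _j ∈ Finset.range n, b0 := by
            rw [Finset.sum_const, Finset.card_range, nsmul_eq_mul]
        _ ≤ _ := Finset.sum_le_sum this
    have hm := iter_mem hp0 hp1 hmean le_rfl zero_lt_one n
    have hX : 0 < 1 - pgfIter p n 0 := by linarith [hm.2]
    have h1 : 1 + (n : ℝ) * b0 ≤ 1 / (1 - pgfIter p n 0) := by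
      rw [htel]; simp only [sub_zero, div_one]; linarith
    have hden : 0 < 1 + (n : ℝ) * b0 := by positivity
    rw [le_div_iff₀ hden]
    have h2 := mul_le_mul_of_nonneg_left h1 hX.le
    rw [mul_one_div, div_self hX.ne'] at h2
    linarith
  have hda : Tendsto (fun n : ℕ => 1 + (n:ℝ) * b0) atTop atTop := by
    apply tendsto_atTop_add_const_left
    exact Tendsto.atTop_mul_const hb0pos tendsto_natCast_atTop_atTop
  have hup : Tendsto (fun n : ℕ => 1 / (1 + n * b0)) atTop (𝓝 0) := by
    simpa [one_div, Pi.inv_def] using hda.inv_tendsto_atTop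
  have hlow : ∀ n : ℕ, (0:ℝ) ≤ 1 - pgfIter p n 0 := fun n => by
    linarith [(iter_mem hp0 hp1 hmean le_rfl zero_lt_one n).2]
  have hsq0 : Tendsto (fun n : ℕ => 1 - pgfIter p n 0) atTop (𝓝 0) :=
    tendsto_of_tendsto_of_tendsto_of_le_of_le tendsto_const_nhds hup hlow key
  have := tendsto_const_nhds (x := (1:ℝ)) (f := atTop (α := ℕ)) |>.sub hsq0
  simpa using this

end Main

lemma ces_traj (hp0 : ∀ k, 0 ≤ p k) (hp1 : ∑' k, p k = 1)
    (hmean : ∑' k : ℕ, (k : ℝ) * p k = 1) (hB : 0 < B)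
    (hsq : Summable fun k : ℕ => (k : ℝ) ^ 2 * p k)
    (hvar : (∑' k : ℕ, (k : ℝ) ^ 2 * p k) - 1 = 2 * B)
    (t : ℕ → ℝ) (ht0 : ∀ n, 0 ≤ t n) (ht1 : ∀ n, t n < 1) :
    Tendsto (fun n : ℕ => (n:ℝ)⁻¹ * ∑ j ∈ Finset.range n, eps p (pgfIter p j (t n)))
      atTop (𝓝 B) := by
  set q : ℕ → ℝ := fun j => pgfIter p j 0 with hq
  have hqm : ∀ j, 0 ≤ q j ∧ q j < 1 :=
    fun j => iter_mem hp0 hp1 hmean le_rfl zero_lt_one j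
  have hq1 : Tendsto q atTop (𝓝 1) :=
    tendsto_iter_zero_one hp0 hp1 hmean hB hsq hvar
  have hlo : Tendsto (fun j => bF p (q j)) atTop (𝓝 B) :=
    tendsto_comp_traj (fun s t hs hst ht => bF_mono hp0 hsq hs hst ht)
      (fun s hs0 hs1 => bF_le hp0 hmean hsq hvar hs0 hs1)
      (fun δ hδ => bF_approx hp0 hmean hsq hvar hδ)
      (fun j => (hqm j).1) (fun j => (hqm j).2.le) hq1
  have haT : Tendsto (fun j => aF p (q j)) atTop (𝓝 1) :=
    tendsto_comp_traj (fun s t hs hst ht => aF_mono hp0 hmean hs hst ht)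
      (fun s hs0 hs1 => aF_le_one hp0 hmean hs0 hs1)
      (fun δ hδ => aF_approx hp0 hmean hδ)
      (fun j => (hqm j).1) (fun j => (hqm j).2.le) hq1
  have hhi : Tendsto (fun j => B / aF p (q j)) atTop (𝓝 B) := by
    have := (tendsto_const_nhds (x := B) (f := atTop (α := ℕ))).div haT one_ne_zero
    simpa [Pi.div_def] using this
  have hC1 := hlo.cesaro
  have hC2 := hhi.cesaro
  refine tendsto_of_tendsto_of_tendsto_of_le_of_le hC1 hC2 ?_ ?_
  · intro n
    refine mul_le_mul_of_nonneg_left (Finset.sum_le_sum fun j _ => ?_) (by positivity)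
    have hm := iter_mem hp0 hp1 hmean (ht0 n) (ht1 n) j
    have hmon : q j ≤ pgfIter p j (t n) :=
      iter_mono_s hp0 hp1 hmean le_rfl (ht0 n) (ht1 n) j
    calc bF p (q j) ≤ bF p (pgfIter p j (t n)) :=
          bF_mono hp0 hsq (hqm j).1 hmon hm.2.le
      _ ≤ eps p _ := bF_le_eps hp0 hp1 hmean hm.1 hm.2.le
  · intro n
    refine mul_le_mul_of_nonneg_left (Finset.sum_le_sum fun j _ => ?_) (by positivity)
    have hm := iter_mem hp0 hp1 hmean (ht0 n) (ht1 n) j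
    have hmon : q j ≤ pgfIter p j (t n) :=
      iter_mono_s hp0 hp1 hmean le_rfl (ht0 n) (ht1 n) j
    exact eps_le hp0 hp1 hmean hB hsq hvar hm.1 hm.2.le (hqm j).1 hmon

section Main
variable (hp0 : ∀ k, 0 ≤ p k) (hp1 : ∑' k, p k = 1)
  (hmean : ∑' k : ℕ, (k : ℝ) * p k = 1) (hB : 0 < B)
  (hsq : Summable fun k : ℕ => (k : ℝ) ^ 2 * p k)
  (hvar : (∑' k : ℕ, (k : ℝ) ^ 2 * p k) - 1 = 2 * B)

include hp0 hp1 hmean hB hsq hvar in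
/-- `B n (1 - f_n(t n)) → B / (1/γ + B)` whenever `n (1 - t n) → γ > 0`
and `t n ∈ [0,1)`. -/
lemma key_limit (t : ℕ → ℝ) (ht0 : ∀ n, 0 ≤ t n) (ht1 : ∀ n, t n < 1)
    {L : ℝ} (hL : 0 ≤ L)
    (hgt : Tendsto (fun n : ℕ => ((n : ℝ) * (1 - t n))⁻¹) atTop (𝓝 L)) :
    Tendsto (fun n : ℕ => B * n * (1 - pgfIter p n (t n))) atTop
      (𝓝 (B / (L + B))) := by
  have hSig := ces_traj hp0 hp1 hmean hB hsq hvar t ht0 ht1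
  have hden : Tendsto (fun n : ℕ =>
      ((n : ℝ) * (1 - t n))⁻¹ + (n:ℝ)⁻¹ * ∑ j ∈ Finset.range n, eps p (pgfIter p j (t n)))
      atTop (𝓝 (L + B)) := hgt.add hSig
  have hlim : Tendsto (fun n : ℕ => B / (((n : ℝ) * (1 - t n))⁻¹
      + (n:ℝ)⁻¹ * ∑ j ∈ Finset.range n, eps p (pgfIter p j (t n)))) atTop
      (𝓝 (B / (L + B))) := by
    refine Tendsto.div tendsto_const_nhds hden ?_
    have : 0 < L + B := by linarith
    exact this.ne'
  refine hlim.congr' ?_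
  filter_upwards [eventually_ge_atTop 1] with n hn
  have hn0 : (0:ℝ) < n := by exact_mod_cast Nat.lt_of_lt_of_le Nat.zero_lt_one hn
  have hm := iter_mem hp0 hp1 hmean (ht0 n) (ht1 n) n
  have hY : 0 < 1 - pgfIter p n (t n) := by linarith [hm.2]
  have htel := telescope hp0 hp1 hmean hsq (ht0 n) (ht1 n) n
  have ht1n : (0:ℝ) < 1 - t n := by linarith [ht1 n]
  -- rewrite denominator
  have hd1 : ((n : ℝ) * (1 - t n))⁻¹
      + (n:ℝ)⁻¹ * ∑ j ∈ Finset.range n, eps p (pgfIter p j (t n))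
      = (n:ℝ)⁻¹ * (1 / (1 - pgfIter p n (t n))) := by
    rw [htel, mul_inv]
    rw [mul_add]
    congr 1
    rw [one_div, mul_comm]
  rw [hd1]
  field_simp

include hp0 hp1 hmean hB hsq hvar in
theorem final (lam : ℝ) (hlam : 0 < lam) :
    Tendsto (fun n : ℕ =>
        B * n * (pgfIter p n (Real.exp (-lam / (B * n))) - pgfIter p n 0))
      atTop (𝓝 (1 / (1 + lam))) := by
  set c := lam / B with hc
  have hcpos : 0 < c := div_pos hlam hB
  set t : ℕ → ℝ := fun n => if n = 0 then 0 else Real.exp (-(c / n)) with ht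
  have ht0 : ∀ n, 0 ≤ t n := by
    intro n
    by_cases h : n = 0 <;> simp [ht, h, (Real.exp_pos _).le]
  have ht1 : ∀ n, t n < 1 := by
    intro n
    rcases eq_or_ne n 0 with rfl | h
    · simp [ht]
    · have hn0 : (0:ℝ) < n := by
        have : 0 < n := Nat.pos_of_ne_zero h
        exact_mod_cast this
      simp only [ht, if_neg h]
      rw [Real.exp_lt_one_iff]
      rw [neg_lt, neg_zero]
      positivity
  -- the Kolmogorov part
  have hx0 : Tendsto (fun n : ℕ => ((n:ℝ) * (1 - (0:ℝ)))⁻¹) atTop (𝓝 0) := by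
    simpa using tendsto_inv_atTop_nhds_zero_nat
  have hX := key_limit hp0 hp1 hmean hB hsq hvar (fun _ => 0) (fun _ => le_rfl)
      (fun _ => zero_lt_one) le_rfl hx0
  rw [show B / (0 + B) = 1 by field_simp; ring] at hX
  -- the shifted part
  have hgt : Tendsto (fun n : ℕ => ((n : ℝ) * (1 - t n))⁻¹) atTop (𝓝 (1/c)) := by
    rw [one_div]
    refine Tendsto.inv₀ ?_ hcpos.ne'
    refine (tendsto_n_one_sub_exp hcpos).congr' ?_
    filter_upwards [eventually_ge_atTop 1] with n hn
    have h : n ≠ 0 := by omega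
    simp [ht, h]
  have hY := key_limit hp0 hp1 hmean hB hsq hvar t ht0 ht1 (by positivity) hgt
  have hval : B / (1/c + B) = lam / (1 + lam) := by
    have h3 : (1:ℝ) + lam ≠ 0 := by linarith
    rw [hc, one_div_div]
    rw [div_add' _ _ _ hlam.ne']
    rw [div_div_eq_mul_div, mul_comm]
    rw [div_eq_div_iff (by positivity) h3]
    ring
  rw [hval] at hY
  have hcomb := hX.sub hY
  rw [show (1:ℝ) - lam / (1 + lam) = 1 / (1 + lam) by field_simp; ring] at hcomb
  refine hcomb.congr' ?_
  filter_upwards [eventually_ge_atTop 1] with n hn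
  have h : n ≠ 0 := by omega
  have harg : -(c / n) = -lam / (B * n) := by
    rw [hc, neg_div, neg_inj, div_div]
  simp only [ht, if_neg h, harg]
  ring
end Main

end Yag

theorem yaglom_laplace_transform    (p : ℕ → ℝ) (hp0 : ∀ k, 0 ≤ p k) (hp1 : ∑' k, p k = 1)
    (hmean : ∑' k : ℕ, (k : ℝ) * p k = 1) (B : ℝ) (hB : 0 < B)
    (hsq : Summable fun k : ℕ => (k : ℝ) ^ 2 * p k)
    (hvar : (∑' k : ℕ, (k : ℝ) ^ 2 * p k) - 1 = 2 * B) :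
    ∀ lam : ℝ, 0 < lam →
      Tendsto (fun n : ℕ =>
          B * n * (pgfIter p n (Real.exp (-lam / (B * n))) - pgfIter p n 0))
        atTop (𝓝 (1 / (1 + lam))) := by
  intro lam hlam
  exact Yag.final hp0 hp1 hmean hB hsq hvar lam hlam
end

section
/- Under criticality (E[ξ]=1, Var(ξ)=2B ∈ (0,∞)) and φ(n) = o(n) with φ(n) → ∞, for every λ > 0, lim_{n→∞} (n²/(xφ(n))) [f_m(e^{λ log f_{⌊xφ(n)⌋}(0)}) - f_m(0)] = 1/(Bλ), where m = n - ⌊xφ(n)⌋ and x > 0 is fixed. -/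
set_option linter.unusedSectionVars false
open MeasureTheory Filter Topology Asymptotics Real Finset

namespace GWaux

noncomputable def Tk (s : ℝ) (k : ℕ) : ℝ := ∑ i ∈ range k, ∑ j ∈ range i, s ^ j


lemma Tk_identity (s : ℝ) (k : ℕ) :
    (s ^ k - 1) + (k : ℝ) * (1 - s) = (1 - s) ^ 2 * Tk s k := by
  induction k with
  | zero => simp [Tk]
  | succ k ih =>
    have h1 : Tk s (k+1) = Tk s k + ∑ j ∈ range k, s ^ j := by
      simp [Tk, Finset.sum_range_succ]
    have h2 : (1 - s) * (1 - s ^ k) = (1-s)^2 * ∑ j ∈ range k, s ^ j := by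
      have := geom_sum_mul s k  -- (∑ s^i) * (s - 1) = s^k - 1
      ring_nf
      nlinarith [this]
    push_cast
    have : (s ^ (k+1) - 1) + ((k:ℝ)+1) * (1 - s)
        = ((s ^ k - 1) + (k : ℝ) * (1 - s)) + (1-s)*(1 - s^k) := by ring
    rw [this, ih, h1, h2]; ring

lemma Tk_nonneg {s : ℝ} (hs : 0 ≤ s) (k : ℕ) : 0 ≤ Tk s k := by
  apply Finset.sum_nonneg; intro i _
  apply Finset.sum_nonneg; intro j _
  positivity

lemma Tk_mono {s t : ℝ} (hs : 0 ≤ s) (hst : s ≤ t) (k : ℕ) : Tk s k ≤ Tk t k := by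
  apply Finset.sum_le_sum; intro i _
  apply Finset.sum_le_sum; intro j _
  exact pow_le_pow_left₀ hs hst j

lemma Tk_le {s : ℝ} (hs : 0 ≤ s) (hs1 : s ≤ 1) (k : ℕ) : Tk s k ≤ (k:ℝ)^2 := by
  calc Tk s k ≤ Tk 1 k := Tk_mono hs hs1 k
  _ = ∑ i ∈ range k, (i:ℝ) := by simp [Tk]
  _ ≤ ∑ i ∈ range k, (k:ℝ) := by
      apply Finset.sum_le_sum; intro i hi
      exact_mod_cast (Finset.mem_range.mp hi).le
  _ = (k:ℝ)*(k:ℝ) := by simp [mul_comm]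
  _ = (k:ℝ)^2 := by ring

lemma Tk_one (k : ℕ) : Tk 1 k = (k:ℝ)^2/2 - (k:ℝ)/2 := by
  have := Tk_identity 1 k
  simp [Tk] at *
  induction k with
  | zero => simp
  | succ k ih =>
    rw [Finset.sum_range_succ, ih]
    push_cast; ring



-- sequence-level auxiliary facts (independent of p)
section seqaux
variable {φ : ℕ → ℝ} {x : ℝ}

lemma xφ_tendsto (hφ : Tendsto φ atTop atTop) (hx : 0 < x) :
    Tendsto (fun n => x * φ n) atTop atTop := hφ.const_mul_atTop hx

lemma k_tendsto (hφ : Tendsto φ atTop atTop) (hx : 0 < x) :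
    Tendsto (fun n => ⌊x * φ n⌋₊) atTop atTop :=
  tendsto_nat_floor_atTop.comp (xφ_tendsto hφ hx)

lemma k_div_tendsto (hφ : Tendsto φ atTop atTop) (hx : 0 < x) :
    Tendsto (fun n => (⌊x * φ n⌋₊ : ℝ) / (x * φ n)) atTop (𝓝 1) :=
  tendsto_nat_floor_div_atTop.comp (xφ_tendsto hφ hx)

lemma k_over_n_tendsto (hφ : Tendsto φ atTop atTop) (hx : 0 < x)
    (hφo : (fun n : ℕ => φ n) =o[atTop] fun n : ℕ => (n : ℝ)) :
    Tendsto (fun n : ℕ => (⌊x * φ n⌋₊ : ℝ) / n) atTop (𝓝 0) := by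
  have h : Tendsto (fun n : ℕ => (x * φ n) / n) atTop (𝓝 0) :=
    ((hφo.const_mul_left x).tendsto_div_nhds_zero)
  have hev : ∀ᶠ n : ℕ in atTop, 0 ≤ x * φ n :=
    (xφ_tendsto hφ hx).eventually_ge_atTop 0
  apply squeeze_zero' (g := fun n : ℕ => (x * φ n) / n)
  · filter_upwards with n
    positivity
  · filter_upwards [hev, eventually_ge_atTop 1] with n hn hn1
    have hnpos : (0:ℝ) < (n:ℝ) := by exact_mod_cast hn1
    gcongr
    exact Nat.floor_le hn
  · exact h

lemma m_facts (hφ : Tendsto φ atTop atTop) (hx : 0 < x)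
    (hφo : (fun n : ℕ => φ n) =o[atTop] fun n : ℕ => (n : ℝ)) :
    ∀ᶠ n : ℕ in atTop, ((n - ⌊x * φ n⌋₊ : ℕ) : ℝ) = (n:ℝ) - (⌊x * φ n⌋₊ : ℝ)
      ∧ 2 * ⌊x * φ n⌋₊ ≤ n := by
  have h := (k_over_n_tendsto hφ hx hφo).eventually_le_const (show (0:ℝ) < 1/2 by norm_num)
  filter_upwards [h, eventually_ge_atTop 1] with n hn hn1
  have hnpos : (0:ℝ) < (n:ℝ) := by exact_mod_cast hn1
  have h2 : (⌊x * φ n⌋₊ : ℝ) ≤ (n:ℝ)/2 := by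
    rw [div_le_iff₀ hnpos] at hn
    linarith
  have hkn : 2 * ⌊x * φ n⌋₊ ≤ n := by
    have : ((2 * ⌊x * φ n⌋₊ : ℕ) : ℝ) ≤ (n:ℝ) := by push_cast; linarith
    exact_mod_cast this
  exact ⟨by rw [Nat.cast_sub (by omega)], hkn⟩

lemma m_tendsto (hφ : Tendsto φ atTop atTop) (hx : 0 < x)
    (hφo : (fun n : ℕ => φ n) =o[atTop] fun n : ℕ => (n : ℝ)) :
    Tendsto (fun n : ℕ => n - ⌊x * φ n⌋₊) atTop atTop := by
  rw [tendsto_atTop]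
  intro b
  filter_upwards [m_facts hφ hx hφo, eventually_ge_atTop (2*b)] with n hn hb
  omega

lemma m_div_n (hφ : Tendsto φ atTop atTop) (hx : 0 < x)
    (hφo : (fun n : ℕ => φ n) =o[atTop] fun n : ℕ => (n : ℝ)) :
    Tendsto (fun n : ℕ => ((n - ⌊x * φ n⌋₊ : ℕ) : ℝ) / n) atTop (𝓝 1) := by
  have h := (k_over_n_tendsto hφ hx hφo).const_sub (b := 1)
  rw [sub_zero] at h
  apply h.congr'
  filter_upwards [m_facts hφ hx hφo, eventually_ge_atTop 1] with n hn hn1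
  have hnpos : (0:ℝ) < (n:ℝ) := by exact_mod_cast hn1
  rw [hn.1]
  field_simp

lemma r_div_k (hφ : Tendsto φ atTop atTop) (hx : 0 < x) {c : ℝ} (hc : 0 < c) :
    Tendsto (fun n : ℕ => (⌈c * (⌊x * φ n⌋₊ : ℝ)⌉₊ : ℝ) / (⌊x * φ n⌋₊ : ℝ))
      atTop (𝓝 c) :=
  (tendsto_nat_ceil_mul_div_atTop hc.le).comp
    (tendsto_natCast_atTop_atTop.comp (k_tendsto hφ hx))

lemma r_ge_one (hφ : Tendsto φ atTop atTop) (hx : 0 < x) {c : ℝ} (hc : 0 < c) :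
    ∀ᶠ n : ℕ in atTop, 1 ≤ ⌈c * (⌊x * φ n⌋₊ : ℝ)⌉₊ := by
  filter_upwards [(k_tendsto hφ hx).eventually_ge_atTop 1] with n hn
  have : (0:ℝ) < c * (⌊x * φ n⌋₊ : ℝ) := by
    apply mul_pos hc
    exact_mod_cast hn
  exact Nat.one_le_ceil_iff.mpr this

lemma r_over_n (hφ : Tendsto φ atTop atTop) (hx : 0 < x) {c : ℝ} (hc : 0 < c)
    (hφo : (fun n : ℕ => φ n) =o[atTop] fun n : ℕ => (n : ℝ)) :
    Tendsto (fun n : ℕ => (⌈c * (⌊x * φ n⌋₊ : ℝ)⌉₊ : ℝ) / n) atTop (𝓝 0) := by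
  have h := (r_div_k hφ hx hc).mul (k_over_n_tendsto hφ hx hφo)
  rw [mul_zero] at h
  apply h.congr'
  filter_upwards [(k_tendsto hφ hx).eventually_ge_atTop 1] with n hn
  have hk : (⌊x * φ n⌋₊ : ℝ) ≠ 0 := by
    have : (1:ℝ) ≤ (⌊x * φ n⌋₊ : ℝ) := by exact_mod_cast hn
    linarith
  field_simp

lemma r_tendsto (hφ : Tendsto φ atTop atTop) (hx : 0 < x) {c : ℝ} (hc : 0 < c) :
    Tendsto (fun n : ℕ => ⌈c * (⌊x * φ n⌋₊ : ℝ)⌉₊) atTop atTop := by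
  apply tendsto_atTop_mono (fun n => Nat.floor_le_ceil _)
  exact tendsto_nat_floor_atTop.comp
    ((tendsto_natCast_atTop_atTop.comp (k_tendsto hφ hx)).const_mul_atTop hc)

lemma slope_exp_log (lam : ℝ) :
    Tendsto (fun t : ℝ => (1 - Real.exp (lam * Real.log (1 - t))) / t)
      (𝓝[≠] (0:ℝ)) (𝓝 lam) := by
  have h1 : HasDerivAt (fun t : ℝ => 1 - t) (-1) 0 := by
    simpa using (hasDerivAt_id (0:ℝ)).const_sub 1
  have h2 : HasDerivAt (fun t : ℝ => Real.log (1 - t)) (-1) 0 := by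
    have := h1.log (by norm_num)
    simpa using this
  have h3 : HasDerivAt (fun t : ℝ => lam * Real.log (1 - t)) (-lam) 0 := by
    have := h2.const_mul lam
    simpa using this
  have h4 : HasDerivAt (fun t : ℝ => Real.exp (lam * Real.log (1 - t))) (-lam) 0 := by
    have := h3.exp
    simpa using this
  have h5 : HasDerivAt (fun t : ℝ => 1 - Real.exp (lam * Real.log (1 - t))) lam 0 := by
    have := h4.const_sub 1
    simpa using this
  have h6 := hasDerivAt_iff_tendsto_slope.mp h5
  apply h6.congr
  intro t
  rw [slope_def_field]
  simp [div_eq_mul_inv]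

end seqaux

section main
variable {p : ℕ → ℝ} {B : ℝ}
variable (hp0 : ∀ k, 0 ≤ p k) (hp1 : ∑' k, p k = 1)
  (hmean : ∑' k : ℕ, (k : ℝ) * p k = 1) (hB : 0 < B)
  (hsq : Summable fun k : ℕ => (k : ℝ) ^ 2 * p k)
  (hvar : (∑' k : ℕ, (k : ℝ) ^ 2 * p k) - 1 = 2 * B)

include hp1 in
lemma sump : Summable p := by
  by_contra h
  rw [tsum_eq_zero_of_not_summable h] at hp1
  norm_num at hp1

include hmean in
lemma summean : Summable (fun k : ℕ => (k:ℝ) * p k) := by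
  by_contra h
  rw [tsum_eq_zero_of_not_summable h] at hmean
  norm_num at hmean

include hp0 hsq in
lemma sum_mul_Tk {s : ℝ} (hs : 0 ≤ s) (hs1 : s ≤ 1) :
    Summable (fun k : ℕ => p k * Tk s k) := by
  apply Summable.of_nonneg_of_le (fun k => mul_nonneg (hp0 k) (Tk_nonneg hs k))
    (fun k => ?_) (hsq.congr (fun k => mul_comm _ _))
  exact mul_le_mul_of_nonneg_left (Tk_le hs hs1 k) (hp0 k)


include hp0 hp1 in
lemma pgf_summable {s : ℝ} (hs : 0 ≤ s) (hs1 : s ≤ 1) :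
    Summable (fun k : ℕ => p k * s ^ k) := by
  apply Summable.of_nonneg_of_le (fun k => mul_nonneg (hp0 k) (pow_nonneg hs k))
    (fun k => ?_) (sump hp1)
  nlinarith [pow_le_one₀ hs hs1 (n := k), hp0 k, pow_nonneg hs k]

include hp0 hp1 in
lemma pgf_le_one {s : ℝ} (hs : 0 ≤ s) (hs1 : s ≤ 1) : pgf p s ≤ 1 := by
  rw [pgf, ← hp1]
  apply Summable.tsum_le_tsum _ (pgf_summable hp0 hp1 hs hs1) (sump hp1)
  intro k
  nlinarith [pow_le_one₀ hs hs1 (n := k), hp0 k, pow_nonneg hs k]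

include hp0 hp1 in
lemma pgf_nonneg {s : ℝ} (hs : 0 ≤ s) : 0 ≤ pgf p s :=
  tsum_nonneg (fun k => mul_nonneg (hp0 k) (pow_nonneg hs k))

include hp0 hp1 in
lemma pgf_mono {s t : ℝ} (hs : 0 ≤ s) (hst : s ≤ t) (ht1 : t ≤ 1) : pgf p s ≤ pgf p t := by
  apply Summable.tsum_le_tsum _ (pgf_summable hp0 hp1 hs (hst.trans ht1))
    (pgf_summable hp0 hp1 (hs.trans hst) ht1)
  intro k
  exact mul_le_mul_of_nonneg_left (pow_le_pow_left₀ hs hst k) (hp0 k)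

/-- the function G with `pgf p s - s = (1-s)^2 * G s`. -/
noncomputable def Gf (p : ℕ → ℝ) (s : ℝ) : ℝ := ∑' k, p k * Tk s k

include hp0 hp1 hmean hsq in
lemma pgf_sub_eq {s : ℝ} (hs : 0 ≤ s) (hs1 : s ≤ 1) :
    pgf p s - s = (1 - s)^2 * Gf p s := by
  have h1 : Summable (fun k : ℕ => p k * (s ^ k - 1)) := by
    have := (pgf_summable hp0 hp1 hs hs1).sub (sump hp1)
    simpa [mul_sub] using this
  have h2 : Summable (fun k : ℕ => p k * ((k:ℝ) * (1 - s))) := by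
    have := (summean hmean).mul_right (1 - s)
    apply this.congr
    intro k; ring
  have key : ∀ k : ℕ, p k * (s ^ k - 1) + p k * ((k:ℝ) * (1-s))
      = (1-s)^2 * (p k * Tk s k) := by
    intro k
    have h := Tk_identity s k
    calc p k * (s ^ k - 1) + p k * ((k:ℝ) * (1-s)) = p k * ((s ^ k - 1) + (k:ℝ)*(1-s)) := by ring
    _ = p k * ((1-s)^2 * Tk s k) := by rw [h]
    _ = (1-s)^2 * (p k * Tk s k) := by ring
  calc pgf p s - s = (∑' k, p k * s ^ k) - (∑' k, p k) + (1 - s) * ∑' k : ℕ, (k:ℝ) * p k := by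
        rw [hp1, hmean, pgf]; ring
  _ = (∑' k, p k * (s^k - 1)) + (∑' k, p k * ((k:ℝ) * (1-s))) := by
        rw [← Summable.tsum_sub (pgf_summable hp0 hp1 hs hs1) (sump hp1),
          ← tsum_mul_left]
        congr 1
        · exact tsum_congr fun k : ℕ => by ring
        · exact tsum_congr fun k : ℕ => by ring
  _ = ∑' k, (p k * (s ^ k - 1) + p k * ((k:ℝ) * (1-s))) := (Summable.tsum_add h1 h2).symm
  _ = ∑' k, (1-s)^2 * (p k * Tk s k) := tsum_congr fun k => key k
  _ = (1-s)^2 * Gf p s := by rw [tsum_mul_left]; rfl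

include hp1 hmean in
lemma tsum_sub_one : ∑' k : ℕ, ((k:ℝ) - 1) * p k = 0 := by
  have h1 := Summable.tsum_sub (summean (p := p) hmean) (sump hp1)
  rw [hmean, hp1] at h1
  calc ∑' k : ℕ, ((k:ℝ) - 1) * p k = ∑' k : ℕ, ((k:ℝ) * p k - p k) :=
        tsum_congr fun k => by ring
  _ = 0 := by rw [h1]; norm_num

include hp0 hp1 hmean hB hsq hvar in
lemma p0_pos : 0 < p 0 := by
  rcases lt_or_eq_of_le (hp0 0) with h | h
  · exact h
  exfalso
  have hnn : ∀ k : ℕ, 0 ≤ ((k:ℝ) - 1) * p k := by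
    intro k
    match k with
    | 0 => simp [← h]
    | (m+1) => 
      apply mul_nonneg _ (hp0 _)
      push_cast; linarith
  have hsummable : Summable (fun k : ℕ => ((k:ℝ) - 1) * p k) :=
    ((summean hmean).sub (sump hp1)).congr (fun k => by ring)
  have hterm : ∀ k : ℕ, ((k:ℝ) - 1) * p k = 0 := by
    intro k
    have := Summable.le_tsum hsummable k (fun i _ => hnn i)
    rw [tsum_sub_one hp1 hmean] at this
    linarith [hnn k]
  have hpk : ∀ k : ℕ, 2 ≤ k → p k = 0 := by
    intro k hk
    have := hterm k
    have hk1 : (0:ℝ) < (k:ℝ) - 1 := by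
      have : (2:ℝ) ≤ (k:ℝ) := by exact_mod_cast hk
      linarith
    rcases mul_eq_zero.mp this with h' | h'
    · linarith
    · exact h'
  have : ∑' k : ℕ, (k:ℝ)^2 * p k = ∑' k : ℕ, (k:ℝ) * p k := by
    apply tsum_congr
    intro k
    match k with
    | 0 => simp
    | 1 => norm_num
    | (m+2) => rw [hpk (m+2) (by omega)]; ring
  rw [this, hmean] at hvar
  norm_num at hvar
  linarith


include hp0 hmean hB hvar in
lemma exists_k2 : ∃ k : ℕ, 2 ≤ k ∧ 0 < p k := by
  by_contra hcon
  push_neg at hcon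
  have hpk : ∀ k : ℕ, 2 ≤ k → p k = 0 := fun k hk => le_antisymm (hcon k hk) (hp0 k)
  have : ∑' k : ℕ, (k:ℝ)^2 * p k = ∑' k : ℕ, (k:ℝ) * p k := by
    apply tsum_congr
    intro k
    match k with
    | 0 => simp
    | 1 => norm_num
    | (m+2) => rw [hpk (m+2) (by omega)]; ring
  rw [this, hmean] at hvar
  norm_num at hvar
  linarith

-- Gf properties
include hp0 hsq in
lemma Gf_nonneg {s : ℝ} (hs : 0 ≤ s) : 0 ≤ Gf p s :=
  tsum_nonneg fun k => mul_nonneg (hp0 k) (Tk_nonneg hs k)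

include hp0 hsq in
lemma Gf_mono {s t : ℝ} (hs : 0 ≤ s) (hst : s ≤ t) (ht : t ≤ 1) : Gf p s ≤ Gf p t := by
  apply Summable.tsum_le_tsum _ (sum_mul_Tk hp0 hsq hs (hst.trans ht)) (sum_mul_Tk hp0 hsq (hs.trans hst) ht)
  intro k
  exact mul_le_mul_of_nonneg_left (Tk_mono hs hst k) (hp0 k)

include hp0 hmean hsq hvar in
lemma Gf_one : Gf p 1 = B := by
  have h2 : Summable (fun k : ℕ => (k:ℝ)^2 * p k / 2) := hsq.div_const 2
  have h3 : Summable (fun k : ℕ => (k:ℝ) * p k / 2) := (summean hmean).div_const 2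
  have : Gf p 1 = ∑' k : ℕ, ((k:ℝ)^2 * p k / 2 - (k:ℝ) * p k / 2) := by
    apply tsum_congr
    intro k
    rw [Tk_one]
    ring
  rw [this, Summable.tsum_sub h2 h3, tsum_div_const, tsum_div_const, hmean]
  linarith

include hp0 hmean hsq hvar in
lemma Gf_le_B {s : ℝ} (hs : 0 ≤ s) (hs1 : s ≤ 1) : Gf p s ≤ B := by
  rw [← Gf_one hp0 hmean hsq hvar]
  exact Gf_mono hp0 hsq hs hs1 le_rfl

include hp0 hmean hsq hvar in
lemma Gf_sup (ε : ℝ) (hε : 0 < ε) : ∃ s₀ : ℝ, 0 ≤ s₀ ∧ s₀ < 1 ∧ B - ε ≤ Gf p s₀ := by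
  -- choose N with partial sum close to B
  have hsum : Summable (fun k : ℕ => p k * Tk 1 k) := sum_mul_Tk hp0 hsq zero_le_one le_rfl
  have htend := hsum.hasSum.tendsto_sum_nat
  rw [show ∑' k : ℕ, p k * Tk 1 k = B from Gf_one hp0 hmean hsq hvar] at htend
  obtain ⟨N, hN⟩ := (Metric.tendsto_atTop.mp htend) (ε/2) (by linarith)
  have hNval : B - ε/2 ≤ ∑ k ∈ range N, p k * Tk 1 k := by
    have := hN N le_rfl
    rw [Real.dist_eq, abs_lt] at this
    linarith [this.1]
  -- continuity of finite sum at s = 1 from the left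
  have hcont : Continuous (fun s : ℝ => ∑ k ∈ range N, p k * Tk s k) := by
    apply continuous_finset_sum
    intro k _
    apply Continuous.mul continuous_const
    unfold Tk
    apply continuous_finset_sum
    intro i _
    exact continuous_finset_sum _ fun j _ => continuous_pow j
  have := hcont.continuousAt (x := (1:ℝ)).tendsto
  have hev : ∀ᶠ s in 𝓝 (1:ℝ), B - ε < ∑ k ∈ range N, p k * Tk s k := by
    apply this.eventually_const_lt
    linarith
  obtain ⟨δ, hδpos, hδ⟩ := Metric.eventually_nhds_iff.mp hev
  set s₀ : ℝ := max 0 (1 - δ/2) with hs₀def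
  have hs₀0 : 0 ≤ s₀ := le_max_left _ _
  have hs₀1 : s₀ < 1 := by
    apply max_lt one_pos
    linarith
  refine ⟨s₀, hs₀0, hs₀1, ?_⟩
  have hdist : dist s₀ 1 < δ := by
    rw [Real.dist_eq, abs_lt]
    constructor
    · have : 1 - δ/2 ≤ s₀ := le_max_right _ _
      linarith
    · linarith
  have h1 : B - ε < ∑ k ∈ range N, p k * Tk s₀ k := hδ hdist
  have h2 : ∑ k ∈ range N, p k * Tk s₀ k ≤ Gf p s₀ :=
    Summable.sum_le_tsum (range N) (fun k _ => mul_nonneg (hp0 k) (Tk_nonneg hs₀0 k))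
      (sum_mul_Tk hp0 hsq hs₀0 hs₀1.le)
  linarith

include hp0 hp1 hmean hB hsq hvar in
lemma pgf_lt_one {s : ℝ} (hs : 0 ≤ s) (hs1 : s < 1) : pgf p s < 1 := by
  obtain ⟨k₀, hk2, hk₀⟩ := exists_k2 hp0 hmean hB hvar
  have hsumdiff : Summable (fun k : ℕ => p k * (1 - s ^ k)) := by
    have := (sump hp1).sub (pgf_summable hp0 hp1 hs hs1.le)
    exact this.congr (fun k => by ring)
  have h1 : 1 - pgf p s = ∑' k : ℕ, p k * (1 - s ^ k) := by
    have : ∑' k : ℕ, p k * (1 - s ^ k) = (∑' k : ℕ, p k) - ∑' k : ℕ, p k * s ^ k := by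
      rw [← Summable.tsum_sub (sump hp1) (pgf_summable hp0 hp1 hs hs1.le)]
      exact tsum_congr fun k => by ring
    rw [this, hp1]; rfl
  have h2 : p k₀ * (1 - s ^ k₀) ≤ ∑' k : ℕ, p k * (1 - s ^ k) := by
    apply Summable.le_tsum hsumdiff k₀
    intro i _
    have : s ^ i ≤ 1 := pow_le_one₀ hs hs1.le
    nlinarith [hp0 i]
  have h3 : 0 < p k₀ * (1 - s ^ k₀) := by
    have : s ^ k₀ < 1 := pow_lt_one₀ hs hs1 (by omega)
    nlinarith
  linarith

include hp0 hmean hB hsq hvar in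
lemma Gf_pos : ∃ c : ℝ, 0 < c ∧ ∀ s : ℝ, 0 ≤ s → s ≤ 1 → c ≤ Gf p s := by
  obtain ⟨k₀, hk2, hk₀⟩ := exists_k2 hp0 hmean hB hvar
  refine ⟨p k₀, hk₀, fun s hs hs1 => ?_⟩
  have hTk : 1 ≤ Tk s k₀ := by
    have hmem : 1 ∈ range k₀ := by
      rw [Finset.mem_range]; omega
    have := Finset.single_le_sum (f := fun i => ∑ j ∈ range i, s ^ j)
      (fun i _ => Finset.sum_nonneg fun j _ => pow_nonneg hs j) hmem
    simpa [Tk] using this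
  calc p k₀ = p k₀ * 1 := by ring
  _ ≤ p k₀ * Tk s k₀ := by nlinarith
  _ ≤ Gf p s := Summable.le_tsum (sum_mul_Tk hp0 hsq hs hs1) k₀
      (fun i _ => mul_nonneg (hp0 i) (Tk_nonneg hs i))

/-- the increment function `g`. -/
noncomputable def gfun (p : ℕ → ℝ) (s : ℝ) : ℝ := (1 - pgf p s)⁻¹ - (1 - s)⁻¹

include hp0 hp1 hmean hB hsq hvar in
lemma gfun_eq {s : ℝ} (hs : 0 ≤ s) (hs1 : s < 1) :
    gfun p s = Gf p s / (1 - (1 - s) * Gf p s) ∧ 0 < 1 - (1 - s) * Gf p s := by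
  have key : pgf p s - s = (1 - s)^2 * Gf p s := pgf_sub_eq hp0 hp1 hmean hsq hs hs1.le
  have hF1 : pgf p s < 1 := pgf_lt_one hp0 hp1 hmean hB hsq hvar hs hs1
  have h1 : (1 : ℝ) - pgf p s ≠ 0 := by linarith
  have h2 : (1 : ℝ) - s ≠ 0 := by linarith
  have hden : 1 - (1 - s) * Gf p s = (1 - pgf p s)/(1 - s) := by
    rw [eq_div_iff h2]
    nlinarith [key]
  have hdenpos : 0 < 1 - (1 - s) * Gf p s := by
    rw [hden]
    apply div_pos <;> linarith
  refine ⟨?_, hdenpos⟩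
  rw [hden, gfun, div_div_eq_mul_div, eq_div_iff h1]
  field_simp
  nlinarith [key]

include hp0 hp1 hmean hB hsq hvar in
lemma gfun_ge {s : ℝ} (hs : 0 ≤ s) (hs1 : s < 1) : Gf p s ≤ gfun p s := by
  obtain ⟨heq, hpos⟩ := gfun_eq hp0 hp1 hmean hB hsq hvar hs hs1
  rw [heq, le_div_iff₀ hpos]
  have hG : 0 ≤ Gf p s := Gf_nonneg hp0 hsq hs
  have hs' : 0 ≤ (1 - s) * Gf p s := mul_nonneg (by linarith) hG
  nlinarith

lemma pgfIter_succ (m : ℕ) (s : ℝ) : pgfIter p (m+1) s = pgf p (pgfIter p m s) := rfl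

lemma pgfIter_add (m r : ℕ) (s : ℝ) :
    pgfIter p (m + r) s = pgfIter p m (pgfIter p r s) := by
  induction m with
  | zero => rw [Nat.zero_add]; rfl
  | succ m ih =>
    have : m + 1 + r = (m + r) + 1 := by omega
    rw [this, pgfIter_succ, pgfIter_succ, ih]

include hp0 hp1 in
lemma pgfIter_mem {s : ℝ} (hs : 0 ≤ s) (hs1 : s ≤ 1) (m : ℕ) :
    0 ≤ pgfIter p m s ∧ pgfIter p m s ≤ 1 := by
  induction m with
  | zero => exact ⟨hs, hs1⟩
  | succ m ih =>
    rw [pgfIter_succ]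
    exact ⟨pgf_nonneg hp0 hp1 ih.1, pgf_le_one hp0 hp1 ih.1 ih.2⟩

include hp0 hp1 in
lemma pgfIter_mono {s t : ℝ} (hs : 0 ≤ s) (hst : s ≤ t) (ht1 : t ≤ 1) (m : ℕ) :
    pgfIter p m s ≤ pgfIter p m t := by
  induction m with
  | zero => exact hst
  | succ m ih =>
    rw [pgfIter_succ, pgfIter_succ]
    exact pgf_mono hp0 hp1 (pgfIter_mem hp0 hp1 hs (hst.trans ht1) m).1 ih
      (pgfIter_mem hp0 hp1 (hs.trans hst) ht1 m).2

include hp0 hp1 hmean hB hsq hvar in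
lemma Q_mem (j : ℕ) : 0 ≤ pgfIter p j 0 ∧ pgfIter p j 0 < 1 := by
  induction j with
  | zero => norm_num [pgfIter]
  | succ j ih =>
    rw [pgfIter_succ]
    exact ⟨pgf_nonneg hp0 hp1 ih.1, (pgf_lt_one hp0 hp1 hmean hB hsq hvar ih.1 ih.2)⟩

include hp0 hp1 hmean hsq in
lemma Q_mono : Monotone (fun j => pgfIter p j 0) := by
  apply monotone_nat_of_le_succ
  intro j
  show pgfIter p j 0 ≤ pgfIter p (j+1) 0
  rw [pgfIter_succ]
  have hm := pgfIter_mem hp0 hp1 le_rfl zero_le_one j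
  have key : pgf p (pgfIter p j 0) - pgfIter p j 0
      = (1 - pgfIter p j 0)^2 * Gf p (pgfIter p j 0) :=
    pgf_sub_eq hp0 hp1 hmean hsq hm.1 hm.2
  nlinarith [Gf_nonneg hp0 hsq hm.1, sq_nonneg (1 - pgfIter p j 0)]

include hp0 hp1 hmean hB hsq hvar in
lemma a_formula (j : ℕ) : (1 - pgfIter p j 0)⁻¹
    = 1 + ∑ i ∈ range j, gfun p (pgfIter p i 0) := by
  induction j with
  | zero => norm_num [pgfIter]
  | succ j ih =>
    rw [Finset.sum_range_succ, pgfIter_succ, gfun]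
    linarith [ih]

include hp0 hp1 hmean hB hsq hvar in
lemma Q_tendsto_one : Tendsto (fun j => pgfIter p j 0) atTop (𝓝 1) := by
  obtain ⟨c, hc, hGc⟩ := Gf_pos hp0 hmean hB hsq hvar
  have hsub : Tendsto (fun j : ℕ => 1 - pgfIter p j 0) atTop (𝓝 0) := by
    have hub : ∀ j : ℕ, 1 - pgfIter p j 0 ≤ (1 + (j:ℝ) * c)⁻¹ := by
      intro j
      have hm := Q_mem hp0 hp1 hmean hB hsq hvar j
      have hsum : (j:ℝ) * c ≤ ∑ i ∈ range j, gfun p (pgfIter p i 0) := by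
        calc (j:ℝ) * c = ∑ _i ∈ range j, c := by simp [mul_comm]
        _ ≤ _ := by
          apply Finset.sum_le_sum
          intro i _
          have hmi := Q_mem hp0 hp1 hmean hB hsq hvar i
          exact (hGc _ hmi.1 hmi.2.le).trans (gfun_ge hp0 hp1 hmean hB hsq hvar hmi.1 hmi.2)
      have ha : (1 + (j:ℝ) * c) ≤ (1 - pgfIter p j 0)⁻¹ := by
        rw [a_formula hp0 hp1 hmean hB hsq hvar j]
        linarith
      have hpos : 0 < 1 - pgfIter p j 0 := by linarith [hm.2]
      have hpos2 : (0:ℝ) < 1 + (j:ℝ) * c := by positivity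
      rw [← inv_inv (1 - pgfIter p j 0)]
      exact inv_anti₀ hpos2 ha
    have hlb : ∀ j : ℕ, 0 ≤ 1 - pgfIter p j 0 := fun j => by
      linarith [(Q_mem hp0 hp1 hmean hB hsq hvar j).2]
    have htend : Tendsto (fun j : ℕ => (1 + (j:ℝ) * c)⁻¹) atTop (𝓝 0) := by
      apply Tendsto.inv_tendsto_atTop
      apply tendsto_atTop_add_const_left
      exact (tendsto_natCast_atTop_atTop).atTop_mul_const hc
    exact squeeze_zero hlb hub htend
  have := hsub.const_sub (b := 1)
  simpa using this

include hp0 hp1 hmean hB hsq hvar in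
lemma Gf_Q_tendsto : Tendsto (fun j => Gf p (pgfIter p j 0)) atTop (𝓝 B) := by
  rw [tendsto_order]
  constructor
  · intro b hb
    obtain ⟨s₀, hs₀0, hs₀1, hs₀⟩ := Gf_sup hp0 hmean hsq hvar ((B - b)/2) (by linarith)
    have hev : ∀ᶠ j in atTop, s₀ ≤ pgfIter p j 0 :=
      (Q_tendsto_one hp0 hp1 hmean hB hsq hvar).eventually (eventually_ge_nhds hs₀1)
    filter_upwards [hev] with j hj
    have hm := Q_mem hp0 hp1 hmean hB hsq hvar j
    have := Gf_mono hp0 hsq hs₀0 hj hm.2.le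
    linarith
  · intro b hb
    filter_upwards with j
    have hm := Q_mem hp0 hp1 hmean hB hsq hvar j
    have := Gf_le_B hp0 hmean hsq hvar hm.1 hm.2.le
    linarith

include hp0 hp1 hmean hB hsq hvar in
lemma gfun_Q_tendsto : Tendsto (fun j => gfun p (pgfIter p j 0)) atTop (𝓝 B) := by
  have hG := Gf_Q_tendsto hp0 hp1 hmean hB hsq hvar
  have h1Q : Tendsto (fun j : ℕ => 1 - pgfIter p j 0) atTop (𝓝 0) := by
    have := (Q_tendsto_one hp0 hp1 hmean hB hsq hvar).const_sub (b := 1)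
    simpa using this
  have hden : Tendsto (fun j : ℕ => 1 - (1 - pgfIter p j 0) * Gf p (pgfIter p j 0))
      atTop (𝓝 1) := by
    have := (h1Q.mul hG).const_sub (b := 1)
    simpa using this
  have heq : ∀ j : ℕ, gfun p (pgfIter p j 0)
      = Gf p (pgfIter p j 0) / (1 - (1 - pgfIter p j 0) * Gf p (pgfIter p j 0)) := by
    intro j
    have hm := Q_mem hp0 hp1 hmean hB hsq hvar j
    exact (gfun_eq hp0 hp1 hmean hB hsq hvar hm.1 hm.2).1
  have := hG.div hden one_ne_zero
  simp only [div_one] at this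
  exact Tendsto.congr (fun j => (heq j).symm) this

include hp0 hp1 hmean hB hsq hvar in
lemma a_div_tendsto :
    Tendsto (fun j : ℕ => (1 - pgfIter p j 0)⁻¹ / j) atTop (𝓝 B) := by
  have hces := (gfun_Q_tendsto hp0 hp1 hmean hB hsq hvar).cesaro
  have hinv : Tendsto (fun j : ℕ => (j:ℝ)⁻¹) atTop (𝓝 0) :=
    tendsto_inv_atTop_zero.comp tendsto_natCast_atTop_atTop
  have := hinv.add hces
  rw [zero_add] at this
  apply this.congr'
  filter_upwards with j
  rw [a_formula hp0 hp1 hmean hB hsq hvar j, div_eq_inv_mul]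
  ring

include hp0 hp1 hmean hB hsq hvar in
lemma window (m r : ℕ → ℕ) (hm : Tendsto m atTop atTop) (hr : ∀ᶠ n in atTop, 1 ≤ r n) :
    Tendsto (fun n => ((1 - pgfIter p (m n + r n) 0)⁻¹ - (1 - pgfIter p (m n) 0)⁻¹) / (r n))
      atTop (𝓝 B) := by
  rw [Metric.tendsto_atTop]
  intro ε hε
  obtain ⟨N, hN⟩ := Metric.tendsto_atTop.mp (gfun_Q_tendsto hp0 hp1 hmean hB hsq hvar)
    (ε/2) (by linarith)
  have hev : ∀ᶠ n in atTop, N ≤ m n ∧ 1 ≤ r n := (hm.eventually_ge_atTop N).and hr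
  obtain ⟨N₂, hN₂⟩ := eventually_atTop.mp hev
  refine ⟨N₂, fun n hn => ?_⟩
  obtain ⟨hmn, hrn⟩ := hN₂ n hn
  have hrpos : (0:ℝ) < (r n : ℝ) := by exact_mod_cast hrn
  have hdiff : (1 - pgfIter p (m n + r n) 0)⁻¹ - (1 - pgfIter p (m n) 0)⁻¹
      = ∑ i ∈ Finset.Ico (m n) (m n + r n), gfun p (pgfIter p i 0) := by
    rw [a_formula hp0 hp1 hmean hB hsq hvar, a_formula hp0 hp1 hmean hB hsq hvar,
      Finset.sum_Ico_eq_sub _ (Nat.le_add_right _ _)]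
    ring
  rw [hdiff]
  have hcard : ((Finset.Ico (m n) (m n + r n)).card : ℝ) = (r n : ℝ) := by
    rw [Nat.card_Ico]; simp
  have key : (∑ i ∈ Finset.Ico (m n) (m n + r n), gfun p (pgfIter p i 0)) - (r n : ℝ) * B
      = ∑ i ∈ Finset.Ico (m n) (m n + r n), (gfun p (pgfIter p i 0) - B) := by
    rw [Finset.sum_sub_distrib, Finset.sum_const, nsmul_eq_mul]
    rw [Nat.card_Ico]
    simp
  have hbound : |(∑ i ∈ Finset.Ico (m n) (m n + r n), gfun p (pgfIter p i 0)) - (r n : ℝ) * B|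
      ≤ (r n : ℝ) * (ε/2) := by
    rw [key]
    calc |∑ i ∈ Finset.Ico (m n) (m n + r n), (gfun p (pgfIter p i 0) - B)|
        ≤ ∑ i ∈ Finset.Ico (m n) (m n + r n), |gfun p (pgfIter p i 0) - B| :=
          Finset.abs_sum_le_sum_abs _ _
    _ ≤ ∑ _i ∈ Finset.Ico (m n) (m n + r n), (ε/2) := by
        apply Finset.sum_le_sum
        intro i hi
        have hiN : N ≤ i := le_trans hmn (Finset.mem_Ico.mp hi).1
        have := hN i hiN
        rw [Real.dist_eq] at this
        linarith [this]
    _ = (r n : ℝ) * (ε/2) := by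
        rw [Finset.sum_const, nsmul_eq_mul, hcard]
  rw [Real.dist_eq]
  have : |(∑ i ∈ Finset.Ico (m n) (m n + r n), gfun p (pgfIter p i 0)) / (r n : ℝ) - B|
      = |(∑ i ∈ Finset.Ico (m n) (m n + r n), gfun p (pgfIter p i 0)) - (r n : ℝ) * B| / (r n : ℝ) := by
    rw [← abs_of_pos hrpos, ← abs_div]
    rw [abs_of_pos hrpos]
    congr 1
    field_simp
  rw [this]
  rw [div_lt_iff₀ hrpos]
  calc |(∑ i ∈ Finset.Ico (m n) (m n + r n), gfun p (pgfIter p i 0)) - (r n : ℝ) * B|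
      ≤ (r n : ℝ) * (ε/2) := hbound
  _ < ε * (r n : ℝ) := by nlinarith

include hp0 hp1 hmean hB hsq hvar in
lemma coreC (φ : ℕ → ℝ) (hφ : Tendsto φ atTop atTop)
    (hφo : (fun n : ℕ => φ n) =o[atTop] fun n : ℕ => (n : ℝ))
    {x : ℝ} (hx : 0 < x) {c : ℝ} (hc : 0 < c) :
    Tendsto (fun n : ℕ => ((n:ℝ)^2/(x * φ n)) *
      (pgfIter p ((n - ⌊x * φ n⌋₊) + ⌈c * (⌊x * φ n⌋₊ : ℝ)⌉₊) 0
        - pgfIter p (n - ⌊x * φ n⌋₊) 0)) atTop (𝓝 (c / B)) := by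
  set k : ℕ → ℕ := fun n => ⌊x * φ n⌋₊ with hk
  set m : ℕ → ℕ := fun n => n - ⌊x * φ n⌋₊ with hm
  set r : ℕ → ℕ := fun n => ⌈c * (⌊x * φ n⌋₊ : ℝ)⌉₊ with hr
  set Q : ℕ → ℝ := fun j => pgfIter p j 0 with hQ
  set a : ℕ → ℝ := fun j => (1 - Q j)⁻¹ with ha
  have hQm : ∀ j, 0 ≤ Q j ∧ Q j < 1 := Q_mem hp0 hp1 hmean hB hsq hvar
  have hapos : ∀ j, 0 < a j := fun j => inv_pos.2 (by linarith [(hQm j).2])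
  have haQ : ∀ j, (a j)⁻¹ = 1 - Q j := fun j => inv_inv _
  have hmT : Tendsto m atTop atTop := m_tendsto hφ hx hφo
  have hwin : Tendsto (fun n => (a (m n + r n) - a (m n)) / (r n)) atTop (𝓝 B) := by
    have := window hp0 hp1 hmean hB hsq hvar m r hmT (r_ge_one hφ hx hc)
    apply this.congr
    intro n
    simp only [ha, hQ]
  -- a (m n) / n → B
  have hmn1 : Tendsto (fun n : ℕ => ((m n : ℕ) : ℝ) / n) atTop (𝓝 1) := m_div_n hφ hx hφo
  have haux : ∀ (j : ℕ → ℕ), Tendsto j atTop atTop →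
      Tendsto (fun n : ℕ => ((j n : ℕ) : ℝ) / n) atTop (𝓝 1) →
      Tendsto (fun n : ℕ => (n : ℝ) / a (j n)) atTop (𝓝 B⁻¹) := by
    intro j hj hjd
    have h1 : Tendsto (fun n => a (j n) / (j n : ℝ)) atTop (𝓝 B) :=
      (a_div_tendsto hp0 hp1 hmean hB hsq hvar).comp hj
    have h2 : Tendsto (fun n => a (j n) / (n : ℝ)) atTop (𝓝 B) := by
      have := h1.mul hjd
      rw [mul_one] at this
      apply this.congr'
      filter_upwards [hj.eventually_ge_atTop 1, eventually_ge_atTop 1] with n h1' h2'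
      have hj0 : ((j n : ℕ) : ℝ) ≠ 0 := by
        have : (1:ℝ) ≤ ((j n : ℕ) : ℝ) := by exact_mod_cast h1'
        linarith
      field_simp
    have := h2.inv₀ hB.ne'
    apply this.congr
    intro n
    rw [inv_div]
  have hnam : Tendsto (fun n : ℕ => (n : ℝ) / a (m n)) atTop (𝓝 B⁻¹) := haux m hmT hmn1
  have hmr : Tendsto (fun n => m n + r n) atTop atTop :=
    tendsto_atTop_mono (fun n => Nat.le_add_right _ _) hmT
  have hmrd : Tendsto (fun n : ℕ => ((m n + r n : ℕ) : ℝ) / n) atTop (𝓝 1) := by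
    have h2 := r_over_n hφ hx hc hφo
    have := hmn1.add h2
    rw [add_zero] at this
    apply this.congr
    intro n
    push_cast
    rw [add_div]
  have hnamr : Tendsto (fun n : ℕ => (n : ℝ) / a (m n + r n)) atTop (𝓝 B⁻¹) :=
    haux (fun n => m n + r n) hmr hmrd
  have hrxφ : Tendsto (fun n : ℕ => ((r n : ℕ) : ℝ) / (x * φ n)) atTop (𝓝 c) := by
    have := (r_div_k hφ hx hc).mul (k_div_tendsto hφ hx)
    rw [mul_one] at this
    apply this.congr'
    filter_upwards [(k_tendsto hφ hx).eventually_ge_atTop 1] with n hn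
    have hk0 : ((k n : ℕ) : ℝ) ≠ 0 := by
      have : (1:ℝ) ≤ ((k n : ℕ):ℝ) := by exact_mod_cast hn
      linarith
    field_simp
    rfl
  have hfinal := ((hwin.mul hrxφ).mul hnam).mul hnamr
  have hlim : B * c * B⁻¹ * B⁻¹ = c / B := by
    field_simp
  rw [hlim] at hfinal
  apply hfinal.congr'
  filter_upwards [(r_ge_one hφ hx hc : ∀ᶠ n : ℕ in atTop, 1 ≤ r n),
    (xφ_tendsto hφ hx).eventually_gt_atTop 0] with n hrn hxφ
  have hr0 : ((r n : ℕ) : ℝ) ≠ 0 := by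
    have : (1:ℝ) ≤ ((r n : ℕ):ℝ) := by exact_mod_cast hrn
    linarith
  have ham := hapos (m n)
  have hamr := hapos (m n + r n)
  have hQdiff : Q (m n + r n) - Q (m n) = (a (m n))⁻¹ - (a (m n + r n))⁻¹ := by
    rw [haQ, haQ]; ring
  show (a (m n + r n) - a (m n)) / (r n) * ((r n : ℝ)/(x * φ n))
      * ((n:ℝ)/a (m n)) * ((n:ℝ)/a (m n + r n))
      = ((n:ℝ)^2/(x * φ n)) * (Q (m n + r n) - Q (m n))
  rw [hQdiff]
  field_simp

end main


end GWaux

theorem difference_limit_small    (p : ℕ → ℝ) (hp0 : ∀ k, 0 ≤ p k) (hp1 : ∑' k, p k = 1)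
    (hmean : ∑' k : ℕ, (k : ℝ) * p k = 1) (B : ℝ) (hB : 0 < B)
    (hsq : Summable fun k : ℕ => (k : ℝ) ^ 2 * p k)
    (hvar : (∑' k : ℕ, (k : ℝ) ^ 2 * p k) - 1 = 2 * B)
    (φ : ℕ → ℝ) (hφ : Tendsto φ atTop atTop)
    (hφo : (fun n : ℕ => φ n) =o[atTop] fun n : ℕ => (n : ℝ)) :
    ∀ x : ℝ, 0 < x → ∀ lam : ℝ, 0 < lam →
      Tendsto (fun n : ℕ =>
          ((n : ℝ) ^ 2 / (x * φ n)) *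
            (pgfIter p (n - ⌊x * φ n⌋₊)
                (Real.exp (lam * Real.log (pgfIter p ⌊x * φ n⌋₊ 0))) -
              pgfIter p (n - ⌊x * φ n⌋₊) 0))
        atTop (𝓝 (1 / (B * lam))) := by
  intro x hx lam hlam
  open GWaux in
  set k : ℕ → ℕ := fun n => ⌊x * φ n⌋₊ with hkdef
  set m : ℕ → ℕ := fun n => n - ⌊x * φ n⌋₊ with hmdef
  set Q : ℕ → ℝ := fun j => pgfIter p j 0 with hQdef
  set a : ℕ → ℝ := fun j => (1 - Q j)⁻¹ with hadef
  set s : ℕ → ℝ := fun n => Real.exp (lam * Real.log (Q (k n))) with hsdef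
  set t : ℕ → ℝ := fun n => 1 - Q (k n) with htdef
  have hQm : ∀ j, 0 ≤ Q j ∧ Q j < 1 := GWaux.Q_mem hp0 hp1 hmean hB hsq hvar
  have hapos : ∀ j, 0 < a j := fun j => inv_pos.2 (by linarith [(hQm j).2])
  have haQ : ∀ j, (a j)⁻¹ = 1 - Q j := fun j => inv_inv _
  have hkT : Tendsto k atTop atTop := GWaux.k_tendsto hφ hx
  have hQkT : Tendsto (fun n => Q (k n)) atTop (𝓝 1) :=
    (GWaux.Q_tendsto_one hp0 hp1 hmean hB hsq hvar).comp hkT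
  have htT : Tendsto t atTop (𝓝 0) := by
    have := hQkT.const_sub (b := 1)
    simpa using this
  have htne : ∀ n, t n ≠ 0 := fun n => by
    have := (hQm (k n)).2
    have : 0 < t n := by simp only [htdef]; linarith
    linarith
  have htT' : Tendsto t atTop (𝓝[≠] (0:ℝ)) := by
    apply tendsto_nhdsWithin_of_tendsto_nhds_of_eventually_within _ htT
    filter_upwards with n
    exact htne n
  have hsl : Tendsto (fun n => (1 - s n) / t n) atTop (𝓝 lam) := by
    have := (GWaux.slope_exp_log lam).comp htT'
    apply this.congr
    intro n
    have : (1 : ℝ) - t n = Q (k n) := by simp only [htdef]; ring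
    simp only [Function.comp_apply, this]
    rfl
  have hak : Tendsto (fun n => a (k n) / (k n : ℝ)) atTop (𝓝 B) :=
    (GWaux.a_div_tendsto hp0 hp1 hmean hB hsq hvar).comp hkT
  have hkt : Tendsto (fun n => (k n : ℝ) * t n) atTop (𝓝 B⁻¹) := by
    have := hak.inv₀ hB.ne'
    apply this.congr
    intro n
    rw [inv_div, div_eq_mul_inv]
    exact congrArg _ (inv_inv _)
  have hks : Tendsto (fun n => (k n : ℝ) * (1 - s n)) atTop (𝓝 (B⁻¹ * lam)) := by
    have := hkt.mul hsl
    apply this.congr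
    intro n
    calc (k n:ℝ) * t n * ((1 - s n)/t n) = (k n:ℝ) * (1 - s n) * (t n / t n) := by ring
    _ = (k n:ℝ) * (1 - s n) := by rw [div_self (htne n), mul_one]
  -- the sandwich
  have sandwich : ∀ ε : ℝ, 0 < ε → ε < 1 →
      ∀ᶠ n in atTop, Q (⌈((1-ε)/lam) * (k n : ℝ)⌉₊) ≤ s n
        ∧ s n ≤ Q (⌈((1+ε)/lam) * (k n : ℝ)⌉₊) := by
    intro ε hε hε1
    have hcm : 0 < (1-ε)/lam := div_pos (by linarith) hlam
    have hcp : 0 < (1+ε)/lam := div_pos (by linarith) hlam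
    have gen : ∀ c : ℝ, 0 < c →
        Tendsto (fun n => (1 - s n) * a (⌈c * (k n : ℝ)⌉₊)) atTop (𝓝 (lam * c)) := by
      intro c hc
      have hrT : Tendsto (fun n => ⌈c * (k n : ℝ)⌉₊) atTop atTop := GWaux.r_tendsto hφ hx hc
      have h1 : Tendsto (fun n => a (⌈c * (k n : ℝ)⌉₊) / (⌈c * (k n : ℝ)⌉₊ : ℝ)) atTop (𝓝 B) :=
        (GWaux.a_div_tendsto hp0 hp1 hmean hB hsq hvar).comp hrT
      have h2 : Tendsto (fun n => (⌈c * (k n : ℝ)⌉₊ : ℝ) / (k n : ℝ)) atTop (𝓝 c) :=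
        GWaux.r_div_k hφ hx hc
      have h3 := (hks.mul h1).mul h2
      have hval : B⁻¹ * lam * B * c = lam * c := by
        field_simp
      rw [hval] at h3
      apply h3.congr'
      filter_upwards [hkT.eventually_ge_atTop 1, hrT.eventually_ge_atTop 1] with n hk1 hr1
      have hk0 : ((k n : ℕ) : ℝ) ≠ 0 := by
        have : (1:ℝ) ≤ ((k n : ℕ) : ℝ) := by exact_mod_cast hk1
        linarith
      have hr0 : ((⌈c * (k n : ℝ)⌉₊ : ℕ) : ℝ) ≠ 0 := by
        have : (1:ℝ) ≤ ((⌈c * (k n : ℝ)⌉₊ : ℕ) : ℝ) := by exact_mod_cast hr1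
        linarith
      field_simp
    have hlo := gen _ hcm
    rw [mul_div_cancel₀ _ hlam.ne'] at hlo
    have hhi := gen _ hcp
    rw [mul_div_cancel₀ _ hlam.ne'] at hhi
    have hloev : ∀ᶠ n in atTop, (1 - s n) * a (⌈((1-ε)/lam) * (k n : ℝ)⌉₊) < 1 :=
      hlo.eventually_lt_const (by linarith)
    have hhiev : ∀ᶠ n in atTop, 1 < (1 - s n) * a (⌈((1+ε)/lam) * (k n : ℝ)⌉₊) :=
      hhi.eventually_const_lt (by linarith)
    filter_upwards [hloev, hhiev] with n h1 h2
    constructor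
    · have ha' := hapos (⌈((1-ε)/lam) * (k n : ℝ)⌉₊)
      have h4 : 1 - s n < (a (⌈((1-ε)/lam) * (k n : ℝ)⌉₊))⁻¹ := by
        rw [inv_eq_one_div, lt_div_iff₀ ha']
        exact h1
      rw [haQ] at h4
      linarith
    · have ha' := hapos (⌈((1+ε)/lam) * (k n : ℝ)⌉₊)
      have h4 : (a (⌈((1+ε)/lam) * (k n : ℝ)⌉₊))⁻¹ < 1 - s n := by
        rw [inv_eq_one_div, div_lt_iff₀ ha']
        linarith
      rw [haQ] at h4
      linarith
  -- final squeeze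
  rw [Metric.tendsto_nhds]
  intro δ hδ
  have hε : 0 < min (1/2) (B*lam*δ/2) := by positivity
  set ε : ℝ := min (1/2) (B*lam*δ/2) with hεdef
  have hε1 : ε < 1 := lt_of_le_of_lt (min_le_left _ _) (by norm_num)
  have hεδ : ε / (lam * B) ≤ δ/2 := by
    rw [div_le_iff₀ (by positivity)]
    calc ε ≤ B*lam*δ/2 := min_le_right _ _
    _ = δ/2*(lam*B) := by ring
  have hcm : 0 < (1-ε)/lam := div_pos (by linarith) hlam
  have hcp : 0 < (1+ε)/lam := div_pos (by linarith) hlam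
  have hLev := Metric.tendsto_nhds.mp
    (GWaux.coreC hp0 hp1 hmean hB hsq hvar φ hφ hφo hx hcm) (δ/2) (by linarith)
  have hUev := Metric.tendsto_nhds.mp
    (GWaux.coreC hp0 hp1 hmean hB hsq hvar φ hφ hφo hx hcp) (δ/2) (by linarith)
  have hCpos : ∀ᶠ n : ℕ in atTop, 0 < (n:ℝ)^2/(x * φ n) := by
    filter_upwards [(GWaux.xφ_tendsto hφ hx).eventually_gt_atTop 0,
      eventually_ge_atTop 1] with n h1 h2
    have : (0:ℝ) < (n:ℝ) := by exact_mod_cast h2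
    positivity
  filter_upwards [hLev, hUev, sandwich ε hε hε1, hCpos] with n hLn hUn hsand hCn
  obtain ⟨hs1, hs2⟩ := hsand
  set rlo : ℕ := ⌈((1-ε)/lam) * (k n : ℝ)⌉₊ with hrlodef
  set rhi : ℕ := ⌈((1+ε)/lam) * (k n : ℝ)⌉₊ with hrhidef
  have hLnn : dist (((n:ℝ)^2/(x * φ n)) * (Q (m n + rlo) - Q (m n))) (((1-ε)/lam) / B) < δ/2 := hLn
  have hUnn : dist (((n:ℝ)^2/(x * φ n)) * (Q (m n + rhi) - Q (m n))) (((1+ε)/lam) / B) < δ/2 := hUn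
  have elo : Q (m n + rlo) = pgfIter p (m n) (Q rlo) := GWaux.pgfIter_add (m n) rlo 0
  have ehi : Q (m n + rhi) = pgfIter p (m n) (Q rhi) := GWaux.pgfIter_add (m n) rhi 0
  have monolo : Q (m n + rlo) ≤ pgfIter p (m n) (s n) := by
    rw [elo]
    exact GWaux.pgfIter_mono hp0 hp1 (hQm rlo).1 hs1 (hs2.trans (hQm rhi).2.le) (m n)
  have monohi : pgfIter p (m n) (s n) ≤ Q (m n + rhi) := by
    rw [ehi]
    exact GWaux.pgfIter_mono hp0 hp1 (Real.exp_pos _).le hs2 (hQm rhi).2.le (m n)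
  have hTlo : ((n:ℝ)^2/(x * φ n)) * (Q (m n + rlo) - Q (m n))
      ≤ ((n:ℝ)^2/(x * φ n)) * (pgfIter p (m n) (s n) - Q (m n)) := by
    apply mul_le_mul_of_nonneg_left (by linarith) hCn.le
  have hThi : ((n:ℝ)^2/(x * φ n)) * (pgfIter p (m n) (s n) - Q (m n))
      ≤ ((n:ℝ)^2/(x * φ n)) * (Q (m n + rhi) - Q (m n)) := by
    apply mul_le_mul_of_nonneg_left (by linarith) hCn.le
  rw [Real.dist_eq, abs_lt] at hLnn hUnn ⊢
  have hvlo : ((1-ε)/lam) / B = 1/(B*lam) - ε/(lam*B) := by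
    field_simp
  have hvhi : ((1+ε)/lam) / B = 1/(B*lam) + ε/(lam*B) := by
    field_simp
  have hεpos' : 0 ≤ ε/(lam*B) := by positivity
  constructor
  · have := hLnn.1
    rw [hvlo] at this
    linarith
  · have := hUnn.2
    rw [hvhi] at this
    linarith
end

section
/- For a critical Galton-Watson process with E[ξ]=1 and Var(ξ)=2B ∈ (0,∞), lim_{n→∞} n²(f_{n+1}(0) - f_n(0)) = 1/B, where f_n(0) = P(Z(n) = 0). -/
open MeasureTheory Filter Topology Asymptotics Real

/-- Auxiliary polynomial `r_k(t)` with `(1-t)^k - 1 + k t = t^2 r_k(t)`. -/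
noncomputable def rfun : ℕ → ℝ → ℝ
  | 0 => fun _ => 0
  | k + 1 => fun t => (1 - t) * rfun k t + k

lemma rfun_nonneg (k : ℕ) {t : ℝ} (ht : t ≤ 1) : 0 ≤ rfun k t := by
  induction k with
  | zero => simp [rfun]
  | succ k ih =>
    have : (0:ℝ) ≤ (1 - t) * rfun k t := mul_nonneg (by linarith) ih
    have : (0:ℝ) ≤ (k:ℝ) := Nat.cast_nonneg k
    simp only [rfun]; positivity

lemma rfun_le (k : ℕ) {t : ℝ} (h0 : 0 ≤ t) (h1 : t ≤ 1) :
    rfun k t ≤ (k : ℝ) * ((k : ℝ) - 1) / 2 := by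
  induction k with
  | zero => simp [rfun]
  | succ k ih =>
    have h2 : (1 - t) * rfun k t ≤ rfun k t := by
      nlinarith [rfun_nonneg k h1]
    have : rfun (k+1) t = (1 - t) * rfun k t + k := rfl
    rw [this]
    push_cast
    nlinarith

lemma rfun_zero (k : ℕ) : rfun k 0 = (k : ℝ) * ((k : ℝ) - 1) / 2 := by
  induction k with
  | zero => simp [rfun]
  | succ k ih =>
    have : rfun (k+1) 0 = (1 - 0) * rfun k 0 + k := rfl
    rw [this, ih]; push_cast; ring

lemma rfun_ge_one (k : ℕ) (hk : 2 ≤ k) {t : ℝ} (ht : t ≤ 1) : 1 ≤ rfun k t := by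
  obtain ⟨m, rfl⟩ : ∃ m, k = m + 1 := ⟨k - 1, by omega⟩
  have hm : 1 ≤ m := by omega
  have : rfun (m+1) t = (1 - t) * rfun m t + m := rfl
  rw [this]
  have h1 : (0:ℝ) ≤ (1 - t) * rfun m t := mul_nonneg (by linarith) (rfun_nonneg m ht)
  have h2 : (1:ℝ) ≤ (m:ℝ) := by exact_mod_cast hm
  linarith

lemma rfun_continuous (k : ℕ) : Continuous (rfun k) := by
  induction k with
  | zero => simpa [rfun] using continuous_const
  | succ k ih =>
    have : rfun (k+1) = fun t => (1 - t) * rfun k t + k := rfl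
    rw [this]
    fun_prop

lemma rfun_identity (k : ℕ) (t : ℝ) : (1 - t) ^ k - 1 + k * t = t ^ 2 * rfun k t := by
  induction k with
  | zero => simp [rfun]
  | succ k ih =>
    have h : rfun (k+1) t = (1 - t) * rfun k t + k := rfl
    have : (1 - t) ^ (k+1) - 1 + (k+1 : ℕ) * t
        = (1 - t) * ((1 - t) ^ k - 1 + k * t) + k * t ^ 2 := by
      push_cast; ring
    rw [this, ih, h]; ring

lemma aux_inv_diff (a b r : ℝ) (ha : a ≠ 0) (hb : b ≠ 0) (h : b = a - a ^ 2 * r) :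
    r * (a / b) = b⁻¹ - a⁻¹ := by
  rw [inv_sub_inv hb ha, show a - b = a ^ 2 * r by rw [h]; ring]
  field_simp

theorem extinction_increment_limit    (p : ℕ → ℝ) (hp0 : ∀ k, 0 ≤ p k) (hp1 : ∑' k, p k = 1)
    (hmean : ∑' k : ℕ, (k : ℝ) * p k = 1) (B : ℝ) (hB : 0 < B)
    (hsq : Summable fun k : ℕ => (k : ℝ) ^ 2 * p k)
    (hvar : (∑' k : ℕ, (k : ℝ) ^ 2 * p k) - 1 = 2 * B) :
    Tendsto (fun n : ℕ => (n : ℝ) ^ 2 * (pgfIter p (n + 1) 0 - pgfIter p n 0))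
      atTop (𝓝 (1 / B)) := by
  -- Basic summability facts
  have hps : Summable p := by
    by_contra h
    rw [tsum_eq_zero_of_not_summable h] at hp1
    norm_num at hp1
  have hk1 : Summable fun k : ℕ => (k : ℝ) * p k := by
    by_contra h
    rw [tsum_eq_zero_of_not_summable h] at hmean
    norm_num at hmean
  -- The dominating bound
  set bnd : ℕ → ℝ := fun k => p k * ((k : ℝ) * ((k : ℝ) - 1) / 2) with hbnd_def
  have hbnd_eq : ∀ k, bnd k = ((k:ℝ)^2 * p k - (k:ℝ) * p k) / 2 := by
    intro k; simp only [hbnd_def]; ring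
  have hbnd_sum : Summable bnd := by
    have : Summable fun k : ℕ => ((k:ℝ)^2 * p k - (k:ℝ) * p k) / 2 :=
      (hsq.sub hk1).div_const 2
    exact this.congr fun k => (hbnd_eq k).symm
  have hbnd_nonneg : ∀ k, 0 ≤ bnd k := by
    intro k
    rcases Nat.eq_zero_or_pos k with h | h
    · simp [hbnd_def, h]
    · have : (1:ℝ) ≤ (k:ℝ) := by exact_mod_cast h
      exact mul_nonneg (hp0 k) (by nlinarith)
  have hbnd_tsum : ∑' k, bnd k = B := by
    have h1 : ∑' k, bnd k = ∑' k : ℕ, ((k:ℝ)^2 * p k - (k:ℝ) * p k) / 2 :=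
      tsum_congr hbnd_eq
    rw [h1, tsum_div_const, Summable.tsum_sub hsq hk1, hmean]
    linarith
  -- R s = ∑' k, p k * rfun k s
  set R : ℝ → ℝ := fun s => ∑' k, p k * rfun k s with hR_def
  have hRsummable : ∀ {s : ℝ}, 0 ≤ s → s ≤ 1 → Summable fun k => p k * rfun k s := by
    intro s h0 h1
    refine hbnd_sum.of_nonneg_of_le (fun k => mul_nonneg (hp0 k) (rfun_nonneg k h1)) ?_
    intro k
    exact mul_le_mul_of_nonneg_left (rfun_le k h0 h1) (hp0 k)
  have hRnonneg : ∀ {s : ℝ}, s ≤ 1 → 0 ≤ R s := by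
    intro s h1
    exact tsum_nonneg fun k => mul_nonneg (hp0 k) (rfun_nonneg k h1)
  have hR0 : R 0 = B := by
    rw [hR_def, ← hbnd_tsum]
    exact tsum_congr fun k => by rw [rfun_zero]
  -- Key identity : pgf p (1 - t) = 1 - t + t^2 * R t for t ∈ [0,1]
  have hkey : ∀ t : ℝ, 0 ≤ t → t ≤ 1 → pgf p (1 - t) = 1 - t + t ^ 2 * R t := by
    intro t h0 h1
    have hident : ∀ k : ℕ, p k * (1 - t) ^ k
        = (p k - t * ((k:ℝ) * p k)) + t ^ 2 * (p k * rfun k t) := by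
      intro k
      have := rfun_identity k t
      linear_combination (p k) * this
    have hs1 : Summable fun k => p k - t * ((k:ℝ) * p k) := hps.sub (hk1.mul_left t)
    have hs2 : Summable fun k => t ^ 2 * (p k * rfun k t) := (hRsummable h0 h1).mul_left _
    calc pgf p (1 - t) = ∑' k, ((p k - t * ((k:ℝ) * p k)) + t ^ 2 * (p k * rfun k t)) :=
          tsum_congr hident
      _ = (∑' k, (p k - t * ((k:ℝ) * p k))) + ∑' k, t ^ 2 * (p k * rfun k t) :=
          Summable.tsum_add hs1 hs2
      _ = (∑' k, p k) - t * ∑' k : ℕ, (k:ℝ) * p k + t ^ 2 * ∑' k : ℕ, p k * rfun k t := by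
          rw [Summable.tsum_sub hps (hk1.mul_left t), tsum_mul_left, tsum_mul_left]
      _ = 1 - t + t ^ 2 * R t := by simp only [hp1, hmean, hR_def]; ring
  -- there exists k₀ ≥ 1 with p k₀ > 0
  obtain ⟨k₀, hk₀⟩ : ∃ k : ℕ, (k:ℝ) * p k ≠ 0 := by
    by_contra h
    push_neg at h
    rw [tsum_congr h] at hmean
    simp at hmean
  have hk₀pos : 0 < p k₀ := by
    rcases lt_or_ge 0 (p k₀) with h | h
    · exact h
    · exact absurd (by rw [le_antisymm h (hp0 k₀)]; ring) hk₀
  have hk₀ge : 1 ≤ k₀ := by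
    by_contra h
    push_neg at h
    interval_cases k₀
    · simp at hk₀
  -- pgf maps [0,1) to [0,1)
  have hpgf_lt : ∀ s : ℝ, 0 ≤ s → s < 1 → pgf p s < 1 := by
    intro s hs0 hs1
    have hle : ∀ k, p k * s ^ k ≤ p k := by
      intro k
      have : s ^ k ≤ 1 := pow_le_one₀ hs0 hs1.le
      nlinarith [hp0 k]
    have hlt : p k₀ * s ^ k₀ < p k₀ := by
      have : s ^ k₀ < 1 := pow_lt_one₀ hs0 hs1 (by omega)
      nlinarith
    have h0 : ∀ k, 0 ≤ p k * s ^ k := fun k => mul_nonneg (hp0 k) (pow_nonneg hs0 k)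
    calc pgf p s < ∑' k, p k := Summable.tsum_lt_tsum_of_nonneg h0 hle hlt hps
      _ = 1 := hp1
  have hpgf_nonneg : ∀ s : ℝ, 0 ≤ s → 0 ≤ pgf p s := by
    intro s hs
    exact tsum_nonneg fun k => mul_nonneg (hp0 k) (pow_nonneg hs k)
  -- iterates stay in [0,1)
  have hiter : ∀ n, 0 ≤ pgfIter p n 0 ∧ pgfIter p n 0 < 1 := by
    intro n
    induction n with
    | zero => simp [pgfIter]
    | succ n ih =>
      exact ⟨hpgf_nonneg _ ih.1, hpgf_lt _ ih.1 ih.2⟩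
  -- q n := 1 - pgfIter p n 0
  set q : ℕ → ℝ := fun n => 1 - pgfIter p n 0 with hq_def
  have hq0 : q 0 = 1 := by simp [hq_def, pgfIter]
  have hqpos : ∀ n, 0 < q n := fun n => by
    have := (hiter n).2; simp only [hq_def]; linarith
  have hqle1 : ∀ n, q n ≤ 1 := fun n => by
    have := (hiter n).1; simp only [hq_def]; linarith
  have hqnn : ∀ n, 0 ≤ q n := fun n => (hqpos n).le
  -- recurrence : q (n+1) = q n - (q n)^2 * R (q n)
  have hqrec : ∀ n, q (n+1) = q n - (q n) ^ 2 * R (q n) := by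
    intro n
    have h1 : pgfIter p (n+1) 0 = pgf p (1 - q n) := by
      simp only [hq_def, pgfIter]
      norm_num
    simp only [hq_def] at *
    rw [h1, hkey _ (hqnn n) (hqle1 n)]
    ring
  -- q is antitone
  have hq_anti : Antitone q := by
    apply antitone_nat_of_succ_le
    intro n
    rw [hqrec n]
    have := hRnonneg (hqle1 n)
    nlinarith [hqpos n]
  -- q converges to some L
  have hbdd : BddBelow (Set.range q) := ⟨0, by rintro x ⟨n, rfl⟩; exact hqnn n⟩
  set L : ℝ := ⨅ n, q n with hL_def
  have hqlim : Tendsto q atTop (𝓝 L) := tendsto_atTop_ciInf hq_anti hbdd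
  have hL0 : 0 ≤ L := le_ciInf hqnn
  have hL1 : L ≤ 1 := le_trans (ciInf_le ⟨0, by rintro x ⟨n, rfl⟩; exact hqnn n⟩ 0) (hqle1 0)
  -- continuity of R along sequences in [0,1]
  have hRcont : ∀ (u : ℕ → ℝ) (l : ℝ), (∀ n, 0 ≤ u n) → (∀ n, u n ≤ 1) → l ≤ 1 →
      Tendsto u atTop (𝓝 l) → Tendsto (fun n => R (u n)) atTop (𝓝 (R l)) := by
    intro u l hu0 hu1 hl1 hul
    refine tendsto_tsum_of_dominated_convergence hbnd_sum ?_ ?_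
    · intro k
      exact (tendsto_const_nhds.mul ((rfun_continuous k).tendsto l)).comp hul |>.congr
        (fun n => rfl)
    · filter_upwards with n k
      rw [Real.norm_eq_abs, abs_of_nonneg (mul_nonneg (hp0 k) (rfun_nonneg k (hu1 n)))]
      exact mul_le_mul_of_nonneg_left (rfun_le k (hu0 n) (hu1 n)) (hp0 k)
  -- L = 0
  have hL : L = 0 := by
    by_contra hLne
    have hLpos : 0 < L := lt_of_le_of_ne hL0 (Ne.symm hLne)
    -- there is k₂ ≥ 2 with p k₂ > 0
    obtain ⟨k₂, hk₂⟩ : ∃ k : ℕ, bnd k ≠ 0 := by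
      by_contra h
      push_neg at h
      rw [tsum_congr h] at hbnd_tsum
      simp at hbnd_tsum
      exact hB.ne hbnd_tsum
    have hk₂pos : 0 < p k₂ := by
      rcases lt_or_ge 0 (p k₂) with h | h
      · exact h
      · exact absurd (by rw [hbnd_def]; simp [le_antisymm h (hp0 k₂)]) hk₂
    have hk₂ge : 2 ≤ k₂ := by
      by_contra h
      push_neg at h
      interval_cases k₂ <;> simp [hbnd_def] at hk₂
    have hRL : 0 < R L := by
      have hterm : p k₂ ≤ p k₂ * rfun k₂ L := by
        nlinarith [rfun_ge_one k₂ hk₂ge hL1, hp0 k₂]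
      have : p k₂ * rfun k₂ L ≤ R L :=
        Summable.le_tsum (hRsummable hL0 hL1) k₂
          (fun j _ => mul_nonneg (hp0 j) (rfun_nonneg j hL1))
      nlinarith
    -- take limits in the recurrence
    have h1 : Tendsto (fun n => q (n+1)) atTop (𝓝 L) := hqlim.comp (tendsto_add_atTop_nat 1)
    have h2 : Tendsto (fun n => q n - (q n)^2 * R (q n)) atTop (𝓝 (L - L^2 * R L)) :=
      hqlim.sub ((hqlim.pow 2).mul (hRcont q L hqnn hqle1 hL1 hqlim))
    have h3 : Tendsto (fun n => q (n+1)) atTop (𝓝 (L - L^2 * R L)) :=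
      h2.congr fun n => (hqrec n).symm
    have h4 : L = L - L^2 * R L := tendsto_nhds_unique h1 h3
    nlinarith [mul_pos (pow_pos hLpos 2) hRL]
  rw [hL] at hqlim
  have hRq : Tendsto (fun n => R (q n)) atTop (𝓝 B) := by
    have := hRcont q 0 hqnn hqle1 (by norm_num) hqlim
    rwa [hR0] at this
  -- ratio q(n+1)/q n → 1
  have hratio : Tendsto (fun n => q n / q (n+1)) atTop (𝓝 1) := by
    have h1 : Tendsto (fun n => 1 - q n * R (q n)) atTop (𝓝 1) := by
      have := hqlim.mul hRq
      rw [zero_mul] at this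
      have h := tendsto_const_nhds (x := (1:ℝ)) (f := atTop (α := ℕ)) |>.sub this
      rwa [sub_zero] at h
    have heq : ∀ n, q (n+1) / q n = 1 - q n * R (q n) := by
      intro n
      have h2 : q n ≠ 0 := (hqpos n).ne'
      rw [hqrec n, div_eq_iff h2]
      ring
    have h2 : Tendsto (fun n => q (n+1) / q n) atTop (𝓝 1) :=
      h1.congr fun n => (heq n).symm
    have h3 := h2.inv₀ one_ne_zero
    rw [inv_one] at h3
    refine h3.congr fun n => ?_
    rw [← one_div, one_div_div]
  -- e n := 1/q(n+1) - 1/q n → B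
  have he : Tendsto (fun n => (q (n+1))⁻¹ - (q n)⁻¹) atTop (𝓝 B) := by
    have h1 : Tendsto (fun n => R (q n) * (q n / q (n+1))) atTop (𝓝 (B * 1)) :=
      hRq.mul hratio
    rw [mul_one] at h1
    refine h1.congr fun n => ?_
    have h2 : q n ≠ 0 := (hqpos n).ne'
    have h3 : q (n+1) ≠ 0 := (hqpos (n+1)).ne'
    exact aux_inv_diff _ _ _ h2 h3 (hqrec n)
  -- Cesàro
  have hces := he.cesaro
  have htel : ∀ n, ∑ i ∈ Finset.range n, ((q (i+1))⁻¹ - (q i)⁻¹) = (q n)⁻¹ - 1 := by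
    intro n
    rw [Finset.sum_range_sub (fun i => (q i)⁻¹)]
    rw [hq0, inv_one]
  have hces2 : Tendsto (fun n : ℕ => (n:ℝ)⁻¹ * ((q n)⁻¹ - 1)) atTop (𝓝 B) :=
    hces.congr fun n => by rw [htel n]
  have hinv0 : Tendsto (fun n : ℕ => (n:ℝ)⁻¹) atTop (𝓝 0) :=
    tendsto_inv_atTop_zero.comp tendsto_natCast_atTop_atTop
  have hces3 : Tendsto (fun n : ℕ => (n:ℝ)⁻¹ * (q n)⁻¹) atTop (𝓝 B) := by
    have := hces2.add hinv0
    rw [add_zero] at this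
    refine this.congr fun n => ?_
    ring
  -- n * q n → 1/B
  have hnq : Tendsto (fun n : ℕ => (n:ℝ) * q n) atTop (𝓝 B⁻¹) := by
    have h1 := hces3.inv₀ hB.ne'
    refine h1.congr' ?_
    filter_upwards [eventually_ge_atTop 1] with n hn
    have hn0 : (n:ℝ) ≠ 0 := by positivity
    rw [mul_inv, inv_inv, inv_inv]
  -- conclude
  have hfinal : Tendsto (fun n : ℕ => ((n:ℝ) * q n)^2 * R (q n)) atTop (𝓝 ((B⁻¹)^2 * B)) :=
    (hnq.pow 2).mul hRq
  have hval : (B⁻¹)^2 * B = 1 / B := by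
    rw [sq, mul_assoc, inv_mul_cancel₀ hB.ne', mul_one, one_div]
  rw [hval] at hfinal
  refine hfinal.congr fun n => ?_
  have h1 : pgfIter p (n+1) 0 - pgfIter p n 0 = q n - q (n+1) := by
    simp only [hq_def]; ring
  rw [h1, hqrec n]
  ring
end

section
/- Assume g.c.d.{k : f_k > 0} = 1, E[ξ]=1, Var(ξ)=2B ∈ (0,∞), and the local limit theorem: lim n²B²(1 + 1/(Bn))^{k+1} P(Z(n)=k) = 1 uniformly for k/n bounded. Then for φ(n) → ∞ with φ(n) = o(n), P(0 < Z(n) ≤ Bφ(n)) ~ φ(n)/(n²B) as n → ∞. -/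
open MeasureTheory Filter Topology Asymptotics Real

theorem small_population_probability    (p : ℕ → ℝ) (hp0 : ∀ k, 0 ≤ p k) (hp1 : ∑' k, p k = 1)
    (hmean : ∑' k : ℕ, (k : ℝ) * p k = 1) (B : ℝ) (hB : 0 < B)
    (hsq : Summable fun k : ℕ => (k : ℝ) ^ 2 * p k)
    (hvar : (∑' k : ℕ, (k : ℝ) ^ 2 * p k) - 1 = 2 * B)
    (hgcd : ∀ d : ℕ, (∀ k, 0 < p k → d ∣ k) → d = 1)
    {Ω : Type*} [MeasurableSpace Ω] (μ : Measure Ω) [IsProbabilityMeasure μ]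
    (Z : ℕ → Ω → ℕ) (hZm : ∀ n, Measurable (Z n))
    (hZ : ∀ n, ∀ s ∈ Set.Icc (0 : ℝ) 1, ∫ ω, s ^ Z n ω ∂μ = pgfIter p n s)
    (φ : ℕ → ℝ) (hφ : Tendsto φ atTop atTop)
    (hφo : (fun n : ℕ => φ n) =o[atTop] fun n : ℕ => (n : ℝ))
    (hLLT : ∀ ε > (0 : ℝ), ∀ C > (0 : ℝ), ∃ N : ℕ, ∀ n ≥ N, ∀ k : ℕ,
      1 ≤ k → (k : ℝ) ≤ C * n →
        |(n : ℝ) ^ 2 * B ^ 2 * (1 + 1 / (B * n)) ^ (k + 1) *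
            (μ {ω | Z n ω = k}).toReal - 1| < ε) :
    (fun n : ℕ => (μ {ω | 0 < Z n ω ∧ (Z n ω : ℝ) ≤ B * φ n}).toReal) ~[atTop]
      fun n : ℕ => φ n / ((n : ℝ) ^ 2 * B) := by
  -- abbreviations
  set K : ℕ → ℕ := fun n => ⌊B * φ n⌋₊ with hKdef
  set q : ℕ → ℝ := fun n => (1 + 1 / (B * n))⁻¹ with hqdef
  set g : ℕ → ℝ := fun n => ∑ k ∈ Finset.Icc 1 (K n), q n ^ (k + 1) with hgdef
  set S : ℕ → ℝ :=
    fun n => (μ {ω | 0 < Z n ω ∧ (Z n ω : ℝ) ≤ B * φ n}).toReal with hSdef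
  -- basic positivity facts
  have hxnn : ∀ n : ℕ, (0:ℝ) ≤ 1 / (B * n) := fun n => by positivity
  have h1x : ∀ n : ℕ, (0:ℝ) < 1 + 1 / (B * n) := fun n => by
    have := hxnn n; linarith
  have hqpos : ∀ n, 0 < q n := fun n => inv_pos.2 (h1x n)
  have hqle1 : ∀ n, q n ≤ 1 := fun n => by
    rw [hqdef]
    exact inv_le_one_of_one_le₀ (by have := hxnn n; linarith)
  -- tendsto facts
  have hx : Tendsto (fun n : ℕ => 1 / (B * n)) atTop (𝓝 0) := by
    have := ((tendsto_natCast_atTop_atTop (R := ℝ)).const_mul_atTop hB).inv_tendsto_atTop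
    exact this.congr fun n => (one_div _).symm
  have hq1 : Tendsto q atTop (𝓝 1) := by
    have := ((tendsto_const_nhds (x := (1:ℝ))).add hx).inv₀ (by norm_num)
    simpa [hqdef] using this
  have hφn : Tendsto (fun n : ℕ => φ n / n) atTop (𝓝 0) := hφo.tendsto_div_nhds_zero
  have hBφ : Tendsto (fun n : ℕ => B * φ n) atTop atTop := hφ.const_mul_atTop hB
  have hev1 : ∀ᶠ n : ℕ in atTop, 1 ≤ B * φ n := hBφ.eventually_ge_atTop 1
  have hKle : ∀ n : ℕ, 0 ≤ B * φ n → (K n : ℝ) ≤ B * φ n := fun n hn => Nat.floor_le hn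
  -- K n / (B n) → 0
  have htK : Tendsto (fun n : ℕ => (K n : ℝ) / (B * n)) atTop (𝓝 0) := by
    apply tendsto_of_tendsto_of_tendsto_of_le_of_le' tendsto_const_nhds hφn
    · exact Eventually.of_forall fun n => by positivity
    · filter_upwards [hev1, eventually_ge_atTop 1] with n hn hn1
      have hn0 : (0:ℝ) < (n:ℝ) := by exact_mod_cast hn1
      calc (K n : ℝ) / (B * n) ≤ (B * φ n) / (B * n) :=
            div_le_div_of_nonneg_right (hKle n (by linarith)) (by positivity)
          _ = φ n / n := mul_div_mul_left _ _ hB.ne'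
  -- q n ^ K n → 1
  have hqK : Tendsto (fun n : ℕ => q n ^ K n) atTop (𝓝 1) := by
    have hlow : Tendsto (fun n : ℕ => Real.exp (-((K n : ℝ) / (B * n)))) atTop (𝓝 1) := by
      have := (Real.continuous_exp.tendsto 0).comp (show Tendsto (fun n:ℕ => -((K n:ℝ)/(B*n))) atTop (𝓝 0) by simpa using htK.neg)
      simpa [Function.comp_def] using this
    apply tendsto_of_tendsto_of_tendsto_of_le_of_le' hlow tendsto_const_nhds
    · apply Eventually.of_forall
      intro n
      have hpow : (1 + 1 / (B * n)) ^ K n ≤ Real.exp ((K n : ℝ) / (B * n)) := by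
        have h1 : ((K n : ℝ)) / (B * n) = (K n : ℝ) * (1 / (B * n)) := by ring
        rw [h1, Real.exp_nat_mul]
        exact pow_le_pow_left₀ (by linarith [hxnn n])
          (by linarith [Real.add_one_le_exp (1 / (B * (n:ℝ)))]) (K n)
      have hq' : q n ^ K n = ((1 + 1 / (B * (n:ℝ))) ^ K n)⁻¹ := by
        rw [hqdef]; exact inv_pow _ _
      rw [hq', Real.exp_neg]
      exact inv_anti₀ (by positivity) hpow
    · exact Eventually.of_forall fun n => pow_le_one₀ (hqpos n).le (hqle1 n)
  -- K n / (B φ n) → 1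
  have hKφ : Tendsto (fun n : ℕ => (K n : ℝ) / (B * φ n)) atTop (𝓝 1) := by
    have hlow : Tendsto (fun n : ℕ => 1 - (B * φ n)⁻¹) atTop (𝓝 1) := by
      have := (tendsto_const_nhds (x := (1:ℝ))).sub hBφ.inv_tendsto_atTop
      simpa using this
    apply tendsto_of_tendsto_of_tendsto_of_le_of_le' hlow tendsto_const_nhds
    · filter_upwards [hev1] with n hn
      have hpos : (0:ℝ) < B * φ n := by linarith
      have h1 : (B * φ n - 1) / (B * φ n) ≤ (K n : ℝ) / (B * φ n) :=
        div_le_div_of_nonneg_right (Nat.sub_one_lt_floor (B * φ n)).le hpos.le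
      calc 1 - (B * φ n)⁻¹ = (B * φ n - 1) / (B * φ n) := by
            rw [sub_div, div_self hpos.ne', one_div]
          _ ≤ _ := h1
    · filter_upwards [hev1] with n hn
      exact div_le_one_of_le₀ (hKle n (by linarith)) (by linarith)
  -- g n / (B φ n) → 1
  have hr : Tendsto (fun n : ℕ => g n / (B * φ n)) atTop (𝓝 1) := by
    have hlow : Tendsto (fun n : ℕ => q n ^ K n * q n * ((K n : ℝ) / (B * φ n)))
        atTop (𝓝 1) := by simpa using (hqK.mul hq1).mul hKφ
    have hup : Tendsto (fun n : ℕ => q n * q n * ((K n : ℝ) / (B * φ n)))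
        atTop (𝓝 1) := by simpa using (hq1.mul hq1).mul hKφ
    apply tendsto_of_tendsto_of_tendsto_of_le_of_le' hlow hup
    · filter_upwards [hev1] with n hn
      have hpos : (0:ℝ) < B * φ n := by linarith
      have hglow : (K n : ℝ) * q n ^ (K n + 1) ≤ g n := by
        rw [hgdef]
        calc (K n : ℝ) * q n ^ (K n + 1)
            = (Finset.Icc 1 (K n)).card • (q n ^ (K n + 1)) := by
              simp [Nat.card_Icc]
          _ ≤ _ := Finset.card_nsmul_le_sum _ _ _ (fun k hk => by
              have hk2 := (Finset.mem_Icc.mp hk).2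
              exact pow_le_pow_of_le_one (hqpos n).le (hqle1 n)
                (Nat.succ_le_succ hk2))
      calc q n ^ K n * q n * ((K n : ℝ) / (B * φ n))
          = ((K n : ℝ) * q n ^ (K n + 1)) / (B * φ n) := by
            rw [← pow_succ]; ring
        _ ≤ g n / (B * φ n) := div_le_div_of_nonneg_right hglow hpos.le
    · filter_upwards [hev1] with n hn
      have hpos : (0:ℝ) < B * φ n := by linarith
      have hgup : g n ≤ (K n : ℝ) * (q n * q n) := by
        rw [hgdef]
        calc ∑ k ∈ Finset.Icc 1 (K n), q n ^ (k + 1)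
            ≤ (Finset.Icc 1 (K n)).card • (q n ^ 2) :=
              Finset.sum_le_card_nsmul _ _ _ (fun k hk => by
                have hk1 := (Finset.mem_Icc.mp hk).1
                exact pow_le_pow_of_le_one (hqpos n).le (hqle1 n)
                  (Nat.succ_le_succ hk1))
          _ = (K n : ℝ) * (q n * q n) := by
              rw [Nat.card_Icc, Nat.add_sub_cancel, nsmul_eq_mul]; ring
      calc g n / (B * φ n) ≤ ((K n : ℝ) * (q n * q n)) / (B * φ n) :=
            div_le_div_of_nonneg_right hgup hpos.le
        _ = q n * q n * ((K n : ℝ) / (B * φ n)) := by ring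
  -- decomposition of the event into atoms
  have hS : ∀ n : ℕ, 0 ≤ B * φ n →
      S n = ∑ k ∈ Finset.Icc 1 (K n), (μ {ω | Z n ω = k}).toReal := by
    intro n hc
    have hset : {ω | 0 < Z n ω ∧ (Z n ω : ℝ) ≤ B * φ n}
        = ⋃ k ∈ Finset.Icc 1 (K n), {ω | Z n ω = k} := by
      ext ω
      simp only [Set.mem_setOf_eq, Set.mem_iUnion, Finset.mem_Icc, exists_prop]
      constructor
      · rintro ⟨h1, h2⟩
        exact ⟨Z n ω, ⟨h1, Nat.le_floor h2⟩, rfl⟩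
      · rintro ⟨k, ⟨hk1, hk2⟩, rfl⟩
        exact ⟨hk1, le_trans (Nat.cast_le.2 hk2) (Nat.floor_le hc)⟩
    rw [hSdef]
    simp only
    rw [hset, measure_biUnion_finset, ENNReal.toReal_sum (fun k _ => measure_ne_top μ _)]
    · intro i _ j _ hij
      simp only [Function.onFun, Set.disjoint_left]
      rintro ω h1 h2
      exact hij (h1.symm.trans h2)
    · exact fun k _ => hZm n (MeasurableSet.singleton k)
  -- eventually B φ n ≤ n
  have hφsmall : ∀ᶠ n : ℕ in atTop, B * φ n ≤ (n : ℝ) := by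
    filter_upwards [hφn.eventually_lt_const (show (0:ℝ) < B⁻¹ by positivity),
      eventually_ge_atTop 1] with n h1 h2
    have hn0 : (0:ℝ) < (n:ℝ) := by exact_mod_cast h2
    rw [div_lt_iff₀ hn0] at h1
    have := mul_lt_mul_of_pos_left h1 hB
    rw [← mul_assoc, mul_inv_cancel₀ hB.ne', one_mul] at this
    exact this.le
  -- key sandwich for the main ratio
  have key : ∀ ε > (0:ℝ), ∀ᶠ n : ℕ in atTop,
      (1 - ε) * (g n / (B * φ n)) ≤ S n / (φ n / ((n:ℝ)^2 * B)) ∧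
      S n / (φ n / ((n:ℝ)^2 * B)) ≤ (1 + ε) * (g n / (B * φ n)) := by
    intro ε hε
    obtain ⟨N, hN⟩ := hLLT ε hε 1 one_pos
    filter_upwards [hev1, hφsmall, eventually_ge_atTop 1, eventually_ge_atTop N]
      with n hn1 hnsm hn hnN
    have hn0 : (0:ℝ) < (n:ℝ) := by exact_mod_cast hn
    have hBφpos : (0:ℝ) < B * φ n := by linarith
    have hφpos : (0:ℝ) < φ n := by
      rcases lt_or_ge 0 (φ n) with h|h
      · exact h
      · exact absurd (mul_nonpos_of_nonneg_of_nonpos hB.le h) (by linarith)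
    -- per-atom bounds
    have hatom : ∀ k ∈ Finset.Icc 1 (K n),
        (1 - ε) * q n ^ (k+1) ≤ (n:ℝ)^2 * B^2 * (μ {ω | Z n ω = k}).toReal ∧
        (n:ℝ)^2 * B^2 * (μ {ω | Z n ω = k}).toReal ≤ (1 + ε) * q n ^ (k+1) := by
      intro k hk
      obtain ⟨hk1, hk2⟩ := Finset.mem_Icc.mp hk
      have hkn : (k:ℝ) ≤ 1 * (n:ℝ) := by
        rw [one_mul]
        calc (k:ℝ) ≤ (K n : ℝ) := Nat.cast_le.2 hk2
          _ ≤ B * φ n := hKle n hBφpos.le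
          _ ≤ (n:ℝ) := hnsm
      have habs := hN n hnN k hk1 hkn
      rw [abs_lt] at habs
      set m := (μ {ω | Z n ω = k}).toReal with hm
      have hqq : q n ^ (k+1) * (1 + 1/(B*(n:ℝ))) ^ (k+1) = 1 := by
        rw [hqdef]
        simp only
        rw [← mul_pow, inv_mul_cancel₀ (h1x n).ne', one_pow]
      have hqk : (0:ℝ) ≤ q n ^ (k+1) := by positivity
      have hrw : (n:ℝ)^2 * B^2 * (1 + 1/(B*(n:ℝ)))^(k+1) * m * q n ^ (k+1)
          = (n:ℝ)^2 * B^2 * m := by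
        calc (n:ℝ)^2 * B^2 * (1 + 1/(B*(n:ℝ)))^(k+1) * m * q n ^ (k+1)
            = (n:ℝ)^2 * B^2 * m * (q n ^ (k+1) * (1 + 1/(B*(n:ℝ)))^(k+1)) := by ring
          _ = _ := by rw [hqq, mul_one]
      constructor
      · have := mul_le_mul_of_nonneg_right (show 1 - ε ≤ (n:ℝ)^2 * B^2 * (1 + 1/(B*(n:ℝ)))^(k+1) * m by linarith [habs.1]) hqk
        rw [hrw] at this
        linarith [this]
      · have := mul_le_mul_of_nonneg_right (show (n:ℝ)^2 * B^2 * (1 + 1/(B*(n:ℝ)))^(k+1) * m ≤ 1 + ε by linarith [habs.2]) hqk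
        rw [hrw] at this
        linarith [this]
    -- summed bounds
    have hSsum := hS n hBφpos.le
    have hlowS : (1 - ε) * g n ≤ (n:ℝ)^2 * B^2 * S n := by
      rw [hSsum, hgdef, Finset.mul_sum, Finset.mul_sum]
      exact Finset.sum_le_sum fun k hk => (hatom k hk).1
    have hupS : (n:ℝ)^2 * B^2 * S n ≤ (1 + ε) * g n := by
      rw [hSsum, hgdef, Finset.mul_sum, Finset.mul_sum]
      exact Finset.sum_le_sum fun k hk => (hatom k hk).2
    have hρ : S n / (φ n / ((n:ℝ)^2 * B)) = S n * ((n:ℝ)^2 * B) / φ n :=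
      div_div_eq_mul_div _ _ _
    constructor
    · rw [hρ]
      rw [show (1 - ε) * (g n / (B * φ n)) = ((1 - ε) * g n) / (B * φ n) by ring,
        div_le_div_iff₀ hBφpos hφpos]
      have := mul_le_mul_of_nonneg_right hlowS hφpos.le
      nlinarith [this]
    · rw [hρ]
      rw [show (1 + ε) * (g n / (B * φ n)) = ((1 + ε) * g n) / (B * φ n) by ring,
        div_le_div_iff₀ hφpos hBφpos]
      have := mul_le_mul_of_nonneg_right hupS hφpos.le
      nlinarith [this]
  -- the ratio tends to 1
  have htend : Tendsto (fun n : ℕ => S n / (φ n / ((n:ℝ)^2 * B))) atTop (𝓝 1) := by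
    rw [Metric.tendsto_nhds]
    intro δ hδ
    filter_upwards [key (δ/6) (by positivity),
      hr.eventually (Metric.ball_mem_nhds (1:ℝ) (show (0:ℝ) < min (δ/2) 1 by positivity))]
      with n hk hrn
    simp only [Metric.mem_ball, Real.dist_eq] at hrn ⊢
    obtain ⟨hl, hu⟩ := hk
    have h2 : |g n / (B * φ n) - 1| < δ/2 := lt_of_lt_of_le hrn (min_le_left _ _)
    have h1 : |g n / (B * φ n) - 1| < 1 := lt_of_lt_of_le hrn (min_le_right _ _)
    rw [abs_lt] at h1 h2 ⊢
    constructor <;> nlinarith [h1.1, h1.2, h2.1, h2.2, hl, hu, hδ]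
  -- conclude
  refine (Asymptotics.isEquivalent_iff_tendsto_one ?_).2 ?_
  · filter_upwards [hev1, eventually_ge_atTop 1] with n hn hn1
    have hn0 : (0:ℝ) < (n:ℝ) := by exact_mod_cast hn1
    have hφpos : (0:ℝ) < φ n := by
      rcases lt_or_ge 0 (φ n) with h|h
      · exact h
      · exact absurd (mul_nonpos_of_nonneg_of_nonpos hB.le h) (by linarith)
    positivity
  · exact htend
end
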